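/- arXiv:1506.06011 — 16 statements merged into one kernel-verified Lean document; each statement's English description precedes it below -/
import Mathlib

section
/- Let p : ℕ×ℕ → ℝ be nonnegative with p(k,n)=0 whenever k>W, with ∑_{k,n} p(k,n) < ∞, and suppose p satisfies the stationary Kolmogorov equations of the greedy model: for all n≥1 and all 0≤k≤W, p(k,n) = 1_{k<W}·(1−r)·∑_{j=0}^{n} π_σ(j)·p(k+1,n−j) + 1_{k>0}·r·∑_{j=0}^{n} π_T(j)·p(k,n−j) + (1/(W+1))·∑_{j=0}^{n} π_T(j)·p(0,n+1−j) + (1/(W+1))·[(1−r)·π_σ(n) + r·π_T(n)]·p(0,0); together with the boundary conditions p(k,0)=0 for all 1≤k≤W, and exp(−λT)·p(0,1) = p(0,0)·(1 − r·exp(−λT) − (1−r)·exp(−λσ)). Then for every complex x with 0<|x|<1, the generating functions F_k(x) = ∑_{n≥0} p(k,n)·x^n satisfy the linear system: a(x)·F_1(x) = F_0(x) − p(0,0) + C(x); a(x)·F_{k+1}(x) = b(x)·F_k(x) + C(x) for all 1≤k≤W−1; and b(x)·F_W(x) + C(x) = 0, where C(x) = −exp(−λT(1−x))·F_0(x)/((W+1)·x)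 + (p(0,0)/(W+1))·[1 + (1/x − r)·exp(−λT(1−x)) − (1−r)·exp(−λσ(1−x))]. -/
open scoped BigOperators

lemma pois_tsum (c : ℝ) (x : ℂ) :
    ∑' j : ℕ, ((Real.exp (-c) * c ^ j / (j.factorial : ℝ) : ℝ) : ℂ) * x ^ j
      = Complex.exp (-(c : ℂ) * (1 - x)) := by
  have h : ∀ j : ℕ, ((Real.exp (-c) * c ^ j / (j.factorial : ℝ) : ℝ) : ℂ) * x ^ j
      = Complex.exp (-(c : ℂ)) * (((c : ℂ) * x) ^ j / (j.factorial : ℂ)) := by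
    intro j
    push_cast
    ring
  rw [tsum_congr h, tsum_mul_left]
  have h2 : (∑' j : ℕ, ((c : ℂ) * x) ^ j / (j.factorial : ℂ)) = Complex.exp ((c : ℂ) * x) := by
    rw [Complex.exp_eq_exp_ℂ, NormedSpace.exp_eq_tsum_div]
  rw [h2, ← Complex.exp_add]
  congr 1
  ring

lemma pois_summable_norm (c : ℝ) (hc : 0 ≤ c) (x : ℂ) (hx : ‖x‖ ≤ 1) :
    Summable fun j : ℕ =>
      ‖((Real.exp (-c) * c ^ j / (j.factorial : ℝ) : ℝ) : ℂ) * x ^ j‖ := by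
  refine Summable.of_nonneg_of_le (fun j => norm_nonneg _) (fun j => ?_)
    ((Real.summable_pow_div_factorial c).mul_left (Real.exp (-c)))
  have h0 : (0 : ℝ) ≤ Real.exp (-c) * c ^ j / (j.factorial : ℝ) := by positivity
  rw [norm_mul, norm_pow, Complex.norm_real, Real.norm_eq_abs, abs_of_nonneg h0]
  calc Real.exp (-c) * c ^ j / (j.factorial : ℝ) * ‖x‖ ^ j
      ≤ Real.exp (-c) * c ^ j / (j.factorial : ℝ) * 1 := by
        apply mul_le_mul_of_nonneg_left _ h0
        exact pow_le_one₀ (norm_nonneg x) hx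
    _ = Real.exp (-c) * (c ^ j / (j.factorial : ℝ)) := by ring

lemma seq_summable_norm {q : ℕ → ℝ} (hq : ∀ n, 0 ≤ q n) (hs : Summable q) (x : ℂ)
    (hx : ‖x‖ ≤ 1) :
    Summable fun n : ℕ => ‖((q n : ℝ) : ℂ) * x ^ n‖ := by
  refine Summable.of_nonneg_of_le (fun n => norm_nonneg _) (fun n => ?_) hs
  rw [norm_mul, norm_pow, Complex.norm_real, Real.norm_eq_abs, abs_of_nonneg (hq n)]
  calc q n * ‖x‖ ^ n ≤ q n * 1 :=
        mul_le_mul_of_nonneg_left (pow_le_one₀ (norm_nonneg x) hx) (hq n)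
    _ = q n := mul_one _

/-- The generating functions of a stationary solution of the greedy
model's Kolmogorov equations satisfy the linear system of Lemma 1. -/
theorem greedy_generating_function_system
    (lam σ T r : ℝ) (hlam : 0 < lam) (hσ : 0 < σ) (hT : 0 < T)
    (hr0 : 0 < r) (hr1 : r < 1) (W : ℕ) (hW : 1 ≤ W)
    (p : ℕ × ℕ → ℝ)
    (hpos : ∀ k n : ℕ, 0 ≤ p (k, n))
    (hzero : ∀ k n : ℕ, W < k → p (k, n) = 0)
    (hsum : Summable p)
    (hKol : ∀ n : ℕ, 1 ≤ n → ∀ k : ℕ, k ≤ W →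
      p (k, n)
        = (if k < W then (1 - r) else 0)
            * ∑ j ∈ Finset.range (n + 1),
                Real.exp (-(lam * σ)) * (lam * σ) ^ j / (j.factorial : ℝ) * p (k + 1, n - j)
          + (if 0 < k then r else 0)
            * ∑ j ∈ Finset.range (n + 1),
                Real.exp (-(lam * T)) * (lam * T) ^ j / (j.factorial : ℝ) * p (k, n - j)
          + (1 / ((W : ℝ) + 1))
            * ∑ j ∈ Finset.range (n + 1),
                Real.exp (-(lam * T)) * (lam * T) ^ j / (j.factorial : ℝ) * p (0, n + 1 - j)
          + (1 / ((W : ℝ) + 1))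
            * ((1 - r) * (Real.exp (-(lam * σ)) * (lam * σ) ^ n / (n.factorial : ℝ))
               + r * (Real.exp (-(lam * T)) * (lam * T) ^ n / (n.factorial : ℝ)))
            * p (0, 0))
    (hbd0 : ∀ k : ℕ, 1 ≤ k → k ≤ W → p (k, 0) = 0)
    (hbd1 : Real.exp (-(lam * T)) * p (0, 1)
      = p (0, 0) * (1 - r * Real.exp (-(lam * T)) - (1 - r) * Real.exp (-(lam * σ))))
    (x : ℂ) (hx0 : 0 < ‖x‖) (hx1 : ‖x‖ < 1)
    (F : ℕ → ℂ) (hF : ∀ k : ℕ, F k = ∑' n : ℕ, (p (k, n) : ℂ) * x ^ n)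
    (a b C : ℂ)
    (ha : a = (1 - (r : ℂ)) * Complex.exp (-((lam : ℂ) * σ) * (1 - x)))
    (hb : b = 1 - (r : ℂ) * Complex.exp (-((lam : ℂ) * T) * (1 - x)))
    (hC : C = -Complex.exp (-((lam : ℂ) * T) * (1 - x)) * F 0 / (((W : ℂ) + 1) * x)
        + ((p (0, 0) : ℂ) / ((W : ℂ) + 1))
          * (1 + (1 / x - (r : ℂ)) * Complex.exp (-((lam : ℂ) * T) * (1 - x))
              - (1 - (r : ℂ)) * Complex.exp (-((lam : ℂ) * σ) * (1 - x)))) :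
    a * F 1 = F 0 - (p (0, 0) : ℂ) + C
      ∧ (∀ k : ℕ, 1 ≤ k → k ≤ W - 1 → a * F (k + 1) = b * F k + C)
      ∧ b * F W + C = 0 := by
  have hx1' : ‖x‖ ≤ 1 := hx1.le
  have hxne : x ≠ 0 := by
    intro h; rw [h] at hx0; simp at hx0
  have hWne : ((W : ℂ) + 1) ≠ 0 := by
    have : (0:ℝ) < (W:ℝ) + 1 := by positivity
    intro h
    have := congrArg Complex.re h
    simp at this
    norm_cast at this
  have hσ' : (0:ℝ) ≤ lam * σ := by positivity
  have hT' : (0:ℝ) ≤ lam * T := by positivity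
  -- basic sequences
  set fσ : ℕ → ℂ :=
    fun j => ((Real.exp (-(lam * σ)) * (lam * σ) ^ j / (j.factorial : ℝ) : ℝ) : ℂ) * x ^ j
    with hfσdef
  set fT : ℕ → ℂ :=
    fun j => ((Real.exp (-(lam * T)) * (lam * T) ^ j / (j.factorial : ℝ) : ℝ) : ℂ) * x ^ j
    with hfTdef
  set g : ℕ → ℕ → ℂ := fun k n => ((p (k, n) : ℝ) : ℂ) * x ^ n with hgdef
  set eσ : ℂ := Complex.exp (-((lam : ℂ) * σ) * (1 - x)) with heσ
  set eT : ℂ := Complex.exp (-((lam : ℂ) * T) * (1 - x)) with heT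
  have hfσn : Summable fun j => ‖fσ j‖ := pois_summable_norm _ hσ' x hx1'
  have hfTn : Summable fun j => ‖fT j‖ := pois_summable_norm _ hT' x hx1'
  have hfσs : Summable fσ := hfσn.of_norm
  have hfTs : Summable fT := hfTn.of_norm
  have hgn : ∀ k, Summable fun n => ‖g k n‖ := fun k =>
    seq_summable_norm (fun n => hpos k n) (hsum.prod_factor k) x hx1'
  have hgs : ∀ k, Summable (g k) := fun k => (hgn k).of_norm
  have htfσ : ∑' j, fσ j = eσ := by
    rw [hfσdef, pois_tsum (lam * σ) x, heσ]
    norm_cast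
  have htfT : ∑' j, fT j = eT := by
    rw [hfTdef, pois_tsum (lam * T) x, heT]
    norm_cast
  have hFg : ∀ k, F k = ∑' n, g k n := fun k => hF k
  -- convolutions
  set Cσ : ℕ → ℕ → ℂ := fun k m => ∑ j ∈ Finset.range (m + 1), fσ j * g k (m - j) with hCσdef
  set CT : ℕ → ℕ → ℂ := fun k m => ∑ j ∈ Finset.range (m + 1), fT j * g k (m - j) with hCTdef
  set D : ℕ → ℂ := fun m => ((∑ j ∈ Finset.range (m + 1),
      Real.exp (-(lam * T)) * (lam * T) ^ j / (j.factorial : ℝ) * p (0, m + 1 - j) : ℝ) : ℂ)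
      * x ^ m with hDdef
  have hCσsum : ∀ k, Summable (Cσ k) := fun k =>
    (summable_norm_sum_mul_range_of_summable_norm hfσn (hgn k)).of_norm
  have hCTsum : ∀ k, Summable (CT k) := fun k =>
    (summable_norm_sum_mul_range_of_summable_norm hfTn (hgn k)).of_norm
  have hCσt : ∀ k, ∑' m, Cσ k m = eσ * F k := fun k => by
    rw [← tsum_mul_tsum_eq_tsum_sum_range_of_summable_norm hfσn (hgn k), htfσ, hFg k]
  have hCTt : ∀ k, ∑' m, CT k m = eT * F k := fun k => by
    rw [← tsum_mul_tsum_eq_tsum_sum_range_of_summable_norm hfTn (hgn k), htfT, hFg k]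
  have hpow : ∀ m : ℕ, ∀ j ∈ Finset.range (m + 1), x ^ j * x ^ (m - j) = x ^ m := by
    intro m j hj
    rw [← pow_add, Nat.add_sub_cancel' (Nat.lt_succ_iff.mp (Finset.mem_range.mp hj))]
  have hCσe : ∀ (k' m : ℕ), ((∑ j ∈ Finset.range (m + 1),
        Real.exp (-(lam * σ)) * (lam * σ) ^ j / (j.factorial : ℝ) * p (k', m - j) : ℝ) : ℂ)
        * x ^ m = Cσ k' m := by
    intro k' m
    rw [hCσdef]
    push_cast
    rw [Finset.sum_mul]
    refine Finset.sum_congr rfl fun j hj => ?_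
    simp only [hfσdef, hgdef]
    push_cast
    rw [← hpow m j hj]
    ring
  have hCTe : ∀ (k' m : ℕ), ((∑ j ∈ Finset.range (m + 1),
        Real.exp (-(lam * T)) * (lam * T) ^ j / (j.factorial : ℝ) * p (k', m - j) : ℝ) : ℂ)
        * x ^ m = CT k' m := by
    intro k' m
    rw [hCTdef]
    push_cast
    rw [Finset.sum_mul]
    refine Finset.sum_congr rfl fun j hj => ?_
    simp only [hfTdef, hgdef]
    push_cast
    rw [← hpow m j hj]
    ring
  -- the shifted convolution D
  have hxD : ∀ m, x * D m = CT 0 (m + 1) - fT (m + 1) * ((p (0, 0) : ℝ) : ℂ) := by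
    intro m
    rw [← hCTe 0 (m + 1)]
    have hsplit : (∑ j ∈ Finset.range (m + 1 + 1),
          Real.exp (-(lam * T)) * (lam * T) ^ j / (j.factorial : ℝ) * p (0, m + 1 - j))
        = (∑ j ∈ Finset.range (m + 1),
            Real.exp (-(lam * T)) * (lam * T) ^ j / (j.factorial : ℝ) * p (0, m + 1 - j))
          + Real.exp (-(lam * T)) * (lam * T) ^ (m + 1) / ((m + 1).factorial : ℝ)
            * p (0, m + 1 - (m + 1)) := Finset.sum_range_succ _ _
    rw [hsplit, hDdef]
    simp only [Nat.sub_self, hfTdef]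
    push_cast
    ring
  have hDrel : ∀ m, D m = x⁻¹ * (CT 0 (m + 1) - fT (m + 1) * ((p (0, 0) : ℝ) : ℂ)) := by
    intro m
    rw [← hxD m, inv_mul_cancel_left₀ hxne]
  have hDsum : Summable D := by
    refine (((((summable_nat_add_iff 1).2 (hCTsum 0)).sub
      (((summable_nat_add_iff 1).2 hfTs).mul_right _)).mul_left x⁻¹)).congr
      fun m => (hDrel m).symm
  have hshift : ∀ (f : ℕ → ℂ), Summable f → ∑' n, f (n + 1) = (∑' n, f n) - f 0 := by
    intro f hf
    rw [Summable.tsum_eq_zero_add hf]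
    ring
  have hDt : ∑' m, D m = x⁻¹ * (eT * (F 0 - ((p (0, 0) : ℝ) : ℂ))) := by
    rw [tsum_congr hDrel, tsum_mul_left,
      Summable.tsum_sub ((summable_nat_add_iff 1).2 (hCTsum 0))
        (((summable_nat_add_iff 1).2 hfTs).mul_right _),
      tsum_mul_right, hshift _ (hCTsum 0), hshift _ hfTs, hCTt 0, htfT]
    have hCT00 : CT 0 0 = fT 0 * ((p (0, 0) : ℝ) : ℂ) := by
      rw [hCTdef]
      simp [hgdef]
    rw [hCT00]
    ring
  -- pointwise identity for n ≥ 1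
  have hptw : ∀ k, k ≤ W → ∀ n : ℕ,
      g k (n + 1)
        = (if k < W then (1 - (r : ℂ)) else 0) * Cσ (k + 1) (n + 1)
          + (if 0 < k then (r : ℂ) else 0) * CT k (n + 1)
          + (1 / ((W : ℂ) + 1)) * D (n + 1)
          + (1 / ((W : ℂ) + 1)) * ((1 - (r : ℂ)) * fσ (n + 1) + (r : ℂ) * fT (n + 1))
            * ((p (0, 0) : ℝ) : ℂ) := by
    intro k hk n
    have hkol := hKol (n + 1) (Nat.le_add_left 1 n) k hk
    have hDe : ((∑ j ∈ Finset.range (n + 1 + 1),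
          Real.exp (-(lam * T)) * (lam * T) ^ j / (j.factorial : ℝ) * p (0, n + 1 + 1 - j) : ℝ) : ℂ)
          * x ^ (n + 1) = D (n + 1) := by
      rw [hDdef]
    have h4e : (((1 - r) * (Real.exp (-(lam * σ)) * (lam * σ) ^ (n + 1) / ((n + 1).factorial : ℝ))
          + r * (Real.exp (-(lam * T)) * (lam * T) ^ (n + 1) / ((n + 1).factorial : ℝ)) : ℝ) : ℂ)
          * x ^ (n + 1)
          = (1 - (r : ℂ)) * fσ (n + 1) + (r : ℂ) * fT (n + 1) := by
      simp only [hfσdef, hfTdef]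
      push_cast
      ring
    have hI1 : ((if k < W then (1 - r) else 0 : ℝ) : ℂ)
        = (if k < W then (1 - (r : ℂ)) else 0) := by
      split <;> push_cast <;> ring
    have hI2 : ((if 0 < k then r else 0 : ℝ) : ℂ) = (if 0 < k then (r : ℂ) else 0) := by
      split <;> push_cast <;> ring
    calc g k (n + 1) = ((p (k, n + 1) : ℝ) : ℂ) * x ^ (n + 1) := rfl
      _ = _ := by
        rw [hkol, Complex.ofReal_add, Complex.ofReal_add, Complex.ofReal_add,
          add_mul, add_mul, add_mul, Complex.ofReal_mul, Complex.ofReal_mul,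
          Complex.ofReal_mul, Complex.ofReal_mul,
          mul_assoc ((if k < W then (1 - r) else 0 : ℝ) : ℂ),
          mul_assoc ((if 0 < k then r else 0 : ℝ) : ℂ),
          mul_assoc ((1 / ((W : ℝ) + 1) : ℝ) : ℂ)]
        rw [hCσe (k + 1) (n + 1), hCTe k (n + 1), hDe, hI1, hI2]
        push_cast at h4e ⊢
        linear_combination (1 / ((W : ℂ) + 1)) * ((p (0, 0) : ℝ) : ℂ) * h4e
  -- the key summed identity
  have hkey : ∀ k, k ≤ W →
      F k = ((p (k, 0) : ℝ) : ℂ)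
        + ((if k < W then (1 - (r : ℂ)) else 0) * (eσ * F (k + 1) - Cσ (k + 1) 0)
          + (if 0 < k then (r : ℂ) else 0) * (eT * F k - CT k 0)
          + (1 / ((W : ℂ) + 1)) * (x⁻¹ * (eT * (F 0 - ((p (0, 0) : ℝ) : ℂ))) - D 0)
          + (1 / ((W : ℂ) + 1)) * ((1 - (r : ℂ)) * (eσ - fσ 0) + (r : ℂ) * (eT - fT 0))
            * ((p (0, 0) : ℝ) : ℂ)) := by
    intro k hk
    have s1 : Summable fun n => Cσ (k + 1) (n + 1) := (summable_nat_add_iff 1).2 (hCσsum (k + 1))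
    have s2 : Summable fun n => CT k (n + 1) := (summable_nat_add_iff 1).2 (hCTsum k)
    have s3 : Summable fun n => D (n + 1) := (summable_nat_add_iff 1).2 hDsum
    have s1' := s1.mul_left (if k < W then (1 - (r : ℂ)) else 0)
    have s2' := s2.mul_left (if 0 < k then (r : ℂ) else 0)
    have s3' : Summable fun n => (1 / ((W : ℂ) + 1)) * D (n + 1) := s3.mul_left _
    have s4' : Summable fun n =>
        (1 / ((W : ℂ) + 1)) * ((1 - (r : ℂ)) * fσ (n + 1) + (r : ℂ) * fT (n + 1))
          * ((p (0, 0) : ℝ) : ℂ) := by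
      refine Summable.mul_right _ (Summable.mul_left _ ?_)
      exact (((summable_nat_add_iff 1).2 hfσs).mul_left _).add
        (((summable_nat_add_iff 1).2 hfTs).mul_left _)
    have hg0 : g k 0 = ((p (k, 0) : ℝ) : ℂ) := by simp [hgdef]
    have t1 : ∑' n, (if k < W then (1 - (r : ℂ)) else 0) * Cσ (k + 1) (n + 1)
        = (if k < W then (1 - (r : ℂ)) else 0) * (eσ * F (k + 1) - Cσ (k + 1) 0) := by
      rw [tsum_mul_left, hshift _ (hCσsum (k + 1)), hCσt (k + 1)]
    have t2 : ∑' n, (if 0 < k then (r : ℂ) else 0) * CT k (n + 1)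
        = (if 0 < k then (r : ℂ) else 0) * (eT * F k - CT k 0) := by
      rw [tsum_mul_left, hshift _ (hCTsum k), hCTt k]
    have t3 : ∑' n, (1 / ((W : ℂ) + 1)) * D (n + 1)
        = (1 / ((W : ℂ) + 1)) * (x⁻¹ * (eT * (F 0 - ((p (0, 0) : ℝ) : ℂ))) - D 0) := by
      rw [tsum_mul_left, hshift _ hDsum, hDt]
    have t4 : ∑' n, (1 / ((W : ℂ) + 1)) * ((1 - (r : ℂ)) * fσ (n + 1) + (r : ℂ) * fT (n + 1))
          * ((p (0, 0) : ℝ) : ℂ)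
        = (1 / ((W : ℂ) + 1)) * ((1 - (r : ℂ)) * (eσ - fσ 0) + (r : ℂ) * (eT - fT 0))
          * ((p (0, 0) : ℝ) : ℂ) := by
      rw [tsum_mul_right, tsum_mul_left,
        Summable.tsum_add (((summable_nat_add_iff 1).2 hfσs).mul_left _)
          (((summable_nat_add_iff 1).2 hfTs).mul_left _), tsum_mul_left, tsum_mul_left,
        hshift _ hfσs, hshift _ hfTs, htfσ, htfT]
    calc F k = ∑' n, g k n := hFg k
      _ = g k 0 + ∑' n, g k (n + 1) := Summable.tsum_eq_zero_add (hgs k)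
      _ = _ := by
        rw [hg0, tsum_congr (hptw k hk), Summable.tsum_add ((s1'.add s2').add s3') s4',
          Summable.tsum_add (s1'.add s2') s3', Summable.tsum_add s1' s2', t1, t2, t3, t4]
  -- boundary values
  have hCσ0 : ∀ k', Cσ k' 0 = fσ 0 * ((p (k', 0) : ℝ) : ℂ) := by
    intro k'; rw [hCσdef]; simp [hgdef]
  have hCT0 : ∀ k', CT k' 0 = fT 0 * ((p (k', 0) : ℝ) : ℂ) := by
    intro k'; rw [hCTdef]; simp [hgdef]
  have hD0 : D 0 = ((Real.exp (-(lam * T)) : ℝ) : ℂ) * ((p (0, 1) : ℝ) : ℂ) := by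
    rw [hDdef]
    simp
  have hfσ0 : fσ 0 = ((Real.exp (-(lam * σ)) : ℝ) : ℂ) := by
    rw [hfσdef]; simp
  have hfT0 : fT 0 = ((Real.exp (-(lam * T)) : ℝ) : ℂ) := by
    rw [hfTdef]; simp
  -- complexified boundary condition
  have hbd1c : ((Real.exp (-(lam * T)) : ℝ) : ℂ) * ((p (0, 1) : ℝ) : ℂ)
      = ((p (0, 0) : ℝ) : ℂ) * (1 - (r : ℂ) * ((Real.exp (-(lam * T)) : ℝ) : ℂ)
        - (1 - (r : ℂ)) * ((Real.exp (-(lam * σ)) : ℝ) : ℂ)) := by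
    exact_mod_cast congrArg (Complex.ofReal) hbd1
  -- the combined constant equals -C
  have hGC : (1 / ((W : ℂ) + 1)) * (x⁻¹ * (eT * (F 0 - ((p (0, 0) : ℝ) : ℂ)))
        - ((Real.exp (-(lam * T)) : ℝ) : ℂ) * ((p (0, 1) : ℝ) : ℂ))
      + (1 / ((W : ℂ) + 1)) * ((1 - (r : ℂ)) * (eσ - fσ 0) + (r : ℂ) * (eT - fT 0))
        * ((p (0, 0) : ℝ) : ℂ) = -C := by
    rw [hfσ0, hfT0, hbd1c, hC]
    field_simp
    ring
  refine ⟨?_, ?_, ?_⟩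
  · -- k = 0
    have h0 := hkey 0 (Nat.zero_le W)
    rw [if_pos (by omega : 0 < W), if_neg (lt_irrefl 0), hCσ0 1, hCT0 0, hD0] at h0
    have hp10 : ((p (1, 0) : ℝ) : ℂ) = 0 := by
      rw [hbd0 1 le_rfl hW]; norm_cast
    rw [hp10] at h0
    rw [ha]
    linear_combination -h0 - hGC
  · -- 1 ≤ k ≤ W - 1
    intro k hk1 hk2
    have hkW : k < W := by omega
    have h0 := hkey k hkW.le
    rw [if_pos hkW, if_pos (by omega : 0 < k), hCσ0 (k + 1), hCT0 k, hD0] at h0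
    have hpk0 : ((p (k, 0) : ℝ) : ℂ) = 0 := by
      rw [hbd0 k hk1 hkW.le]; norm_cast
    have hpk10 : ((p (k + 1, 0) : ℝ) : ℂ) = 0 := by
      rw [hbd0 (k + 1) (by omega) (by omega)]; norm_cast
    rw [hpk0, hpk10] at h0
    rw [ha, hb]
    linear_combination -h0 - hGC
  · -- k = W
    have h0 := hkey W le_rfl
    rw [if_neg (lt_irrefl W), if_pos (by omega : 0 < W), hCT0 W, hD0] at h0
    have hpW0 : ((p (W, 0) : ℝ) : ℂ) = 0 := by
      rw [hbd0 W hW le_rfl]; norm_cast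
    rw [hpW0] at h0
    rw [hb]
    linear_combination h0 + hGC
end

section
/- Let x be a complex number with x≠0, a(x)≠0 and S(x)≠0, let p₀₀ be a complex number, and let F_0, F_1, …, F_W be complex numbers satisfying the linear system: a(x)·F_1 = F_0 − p₀₀ + C; a(x)·F_{k+1} = b(x)·F_k + C for all 1≤k≤W−1; and b(x)·F_W + C = 0, where C = −exp(−λT(1−x))·F_0/((W+1)·x) + (p₀₀/(W+1))·[1 + (1/x − r)·exp(−λT(1−x)) − (1−r)·exp(−λσ(1−x))]. Then for every 1≤k≤W, F_k = ((F_0 − p₀₀)/a(x)) · (∑_{i=k−1}^{W−1} u(x)^i)/S(x), and moreover R(x)·F_0 = p₀₀·Q(x). -/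
open scoped BigOperators

/-- Formal solution of the linear system for the greedy model:
the generating functions are expressed in terms of `F 0`, and `F 0` satisfies
`R·F₀ = p₀₀·Q`. -/
theorem greedy_formal_solution
    (lam σ T r : ℝ) (hlam : 0 < lam) (hσ : 0 < σ) (hT : 0 < T)
    (hr0 : 0 < r) (hr1 : r < 1) (W : ℕ) (hW : 1 ≤ W)
    (x : ℂ) (hx : x ≠ 0)
    (a b u S f R Q : ℂ)
    (ha : a = (1 - (r : ℂ)) * Complex.exp (-((lam : ℂ) * σ) * (1 - x)))
    (hb : b = 1 - (r : ℂ) * Complex.exp (-((lam : ℂ) * T) * (1 - x)))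
    (hu : u = b / a)
    (hS : S = ∑ i ∈ Finset.range (W + 1), u ^ i)
    (hf : f = ((W : ℂ) + 1) * u ^ W / S)
    (hR : R = Complex.exp (-((lam : ℂ) * T) * (1 - x)) / x - f)
    (hQ : Q = 1 + (1 / x - (r : ℂ)) * Complex.exp (-((lam : ℂ) * T) * (1 - x))
        - (1 - (r : ℂ)) * Complex.exp (-((lam : ℂ) * σ) * (1 - x)) - f)
    (ha0 : a ≠ 0) (hS0 : S ≠ 0)
    (p00 : ℂ) (F : ℕ → ℂ) (C : ℂ)
    (hC : C = -Complex.exp (-((lam : ℂ) * T) * (1 - x)) * F 0 / (((W : ℂ) + 1) * x)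
        + (p00 / ((W : ℂ) + 1))
          * (1 + (1 / x - (r : ℂ)) * Complex.exp (-((lam : ℂ) * T) * (1 - x))
              - (1 - (r : ℂ)) * Complex.exp (-((lam : ℂ) * σ) * (1 - x))))
    (h1 : a * F 1 = F 0 - p00 + C)
    (h2 : ∀ k : ℕ, 1 ≤ k → k ≤ W - 1 → a * F (k + 1) = b * F k + C)
    (h3 : b * F W + C = 0) :
    (∀ k : ℕ, 1 ≤ k → k ≤ W →
        F k = ((F 0 - p00) / a) * (∑ i ∈ Finset.Ico (k - 1) W, u ^ i) / S)
      ∧ R * F 0 = p00 * Q := by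
  have hba : b = a * u := by rw [hu]; field_simp
  have hW1 : ((W : ℂ) + 1) ≠ 0 := Nat.cast_add_one_ne_zero W
  -- main recursion solution
  have main : ∀ k : ℕ, 1 ≤ k → k ≤ W →
      a * F k = (F 0 - p00) * u ^ (k - 1) + C * ∑ i ∈ Finset.range k, u ^ i := by
    intro k
    induction k with
    | zero => intro h; omega
    | succ n ih =>
      intro _ hkW
      rcases Nat.eq_zero_or_pos n with hn | hn
      · subst hn
        simpa using h1
      · have hrec := h2 n hn (by omega)
        have hFn := ih hn (by omega)
        have hpow : u * u ^ (n - 1) = u ^ n := by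
          rw [← pow_succ']; congr 1; omega
        have hsum : u * ∑ i ∈ Finset.range n, u ^ i + 1
            = ∑ i ∈ Finset.range (n + 1), u ^ i := (geom_sum_succ).symm
        simp only [Nat.add_sub_cancel]
        calc a * F (n + 1) = u * (a * F n) + C := by rw [hrec, hba]; ring
          _ = u * ((F 0 - p00) * u ^ (n - 1) + C * ∑ i ∈ Finset.range n, u ^ i) + C := by
              rw [hFn]
          _ = (F 0 - p00) * (u * u ^ (n - 1))
              + C * (u * ∑ i ∈ Finset.range n, u ^ i + 1) := by ring
          _ = (F 0 - p00) * u ^ n + C * ∑ i ∈ Finset.range (n + 1), u ^ i := by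
              rw [hpow, hsum]
  -- the key relation determining C
  have key : (F 0 - p00) * u ^ W + C * S = 0 := by
    have hFW := main W hW le_rfl
    have h3' : u * (a * F W) + C = 0 := by
      rw [← h3, hba]; ring
    rw [hFW] at h3'
    have hpow : u * u ^ (W - 1) = u ^ W := by
      rw [← pow_succ']; congr 1; omega
    have hsum : u * ∑ i ∈ Finset.range W, u ^ i + 1
        = ∑ i ∈ Finset.range (W + 1), u ^ i := (geom_sum_succ).symm
    calc (F 0 - p00) * u ^ W + C * S
        = (F 0 - p00) * (u * u ^ (W - 1))
          + C * (u * ∑ i ∈ Finset.range W, u ^ i + 1) := by rw [hpow, hS, hsum]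
      _ = u * ((F 0 - p00) * u ^ (W - 1) + C * ∑ i ∈ Finset.range W, u ^ i) + C := by ring
      _ = 0 := h3'
  constructor
  · intro k hk1 hkW
    -- sum identity
    have hsplit : S = (∑ i ∈ Finset.range (W - k + 1), u ^ i)
        + u ^ (W - k + 1) * ∑ i ∈ Finset.range k, u ^ i := by
      rw [hS]
      have hWk : W + 1 = (W - k + 1) + k := by omega
      rw [hWk, Finset.sum_range_add]
      congr 1
      rw [Finset.mul_sum]
      refine Finset.sum_congr rfl fun i _ => ?_
      rw [← pow_add]
    have hIco : ∑ i ∈ Finset.Ico (k - 1) W, u ^ i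
        = u ^ (k - 1) * ∑ i ∈ Finset.range (W - k + 1), u ^ i := by
      rw [Finset.sum_Ico_eq_sum_range, Finset.mul_sum]
      have : W - (k - 1) = W - k + 1 := by omega
      rw [this]
      refine Finset.sum_congr rfl fun i _ => ?_
      rw [pow_add]
    have hpowW : u ^ (k - 1) * u ^ (W - k + 1) = u ^ W := by
      rw [← pow_add]; congr 1; omega
    have hmain := main k hk1 hkW
    have hCS : C * S = -((F 0 - p00) * u ^ W) := by linear_combination key
    have hASF : a * S * F k = (F 0 - p00) * ∑ i ∈ Finset.Ico (k - 1) W, u ^ i := by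
      have hstep : a * S * F k = S * (a * F k) := by ring
      rw [hstep, hmain, hIco]
      calc S * ((F 0 - p00) * u ^ (k - 1) + C * ∑ i ∈ Finset.range k, u ^ i)
          = (F 0 - p00) * (u ^ (k - 1) * S)
            + (C * S) * ∑ i ∈ Finset.range k, u ^ i := by ring
        _ = (F 0 - p00) * (u ^ (k - 1) * S)
            - ((F 0 - p00) * u ^ W) * ∑ i ∈ Finset.range k, u ^ i := by
            rw [hCS]; ring
        _ = (F 0 - p00) * (u ^ (k - 1) * (∑ i ∈ Finset.range (W - k + 1), u ^ i)) := by
            nth_rewrite 1 [hsplit]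
            rw [← hpowW]; ring
    field_simp
    linear_combination hASF
  · -- second statement
    have hfS : f * S = ((W : ℂ) + 1) * u ^ W := by
      rw [hf]; field_simp
    have hkey2 : (F 0 - p00) * f + ((W : ℂ) + 1) * C = 0 := by
      have h : ((F 0 - p00) * f + ((W : ℂ) + 1) * C) * S = 0 := by
        calc ((F 0 - p00) * f + ((W : ℂ) + 1) * C) * S
            = (F 0 - p00) * (f * S) + ((W : ℂ) + 1) * (C * S) := by ring
          _ = ((W : ℂ) + 1) * ((F 0 - p00) * u ^ W + C * S) := by rw [hfS]; ring
          _ = 0 := by rw [key]; ring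
      exact (mul_eq_zero.mp h).resolve_right hS0
    set E1 := Complex.exp (-((lam : ℂ) * T) * (1 - x)) with hE1
    set E2 := Complex.exp (-((lam : ℂ) * σ) * (1 - x)) with hE2
    have hCval : ((W : ℂ) + 1) * C * x
        = -E1 * F 0 + p00 * (x + (1 - x * (r : ℂ)) * E1 - x * (1 - (r : ℂ)) * E2) := by
      rw [hC]; field_simp
    have hfinal : (F 0 - p00) * f * x
        = E1 * F 0 - p00 * (x + (1 - x * (r : ℂ)) * E1 - x * (1 - (r : ℂ)) * E2) := by
      linear_combination x * hkey2 - hCval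
    rw [hR, hQ]
    field_simp
    linear_combination -hfinal
end

section
/- The functions R and Q vanish at x=1 and are differentiable at x=1, with derivatives R'(1) = −1 + λT + λW·(rT+(1−r)σ)/(2(1−r)) and Q'(1) = −1 + (1−r)·λ·(T−σ) + λW·(rT+(1−r)σ)/(2(1−r)). Equivalently, R'(1) = λB − 1 where B = T + W·(rT+(1−r)σ)/(2(1−r)). -/
open scoped BigOperators

/-- `R` and `Q` vanish at `x = 1` and are differentiable there, with
`R'(1) = -1 + λT + λW(rT+(1-r)σ)/(2(1-r))` and
`Q'(1) = -1 + (1-r)λ(T-σ) + λW(rT+(1-r)σ)/(2(1-r))`; equivalently `R'(1) = λB - 1`. -/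
theorem greedy_R_Q_derivatives_at_one
    (lam σ T r : ℝ) (hlam : 0 < lam) (hσ : 0 < σ) (hT : 0 < T)
    (hr0 : 0 < r) (hr1 : r < 1) (W : ℕ) (hW : 1 ≤ W)
    (u S f R Q : ℝ → ℝ)
    (hu : ∀ x : ℝ, u x
      = (1 - r * Real.exp (-(lam * T) * (1 - x))) / ((1 - r) * Real.exp (-(lam * σ) * (1 - x))))
    (hS : ∀ x : ℝ, S x = ∑ i ∈ Finset.range (W + 1), u x ^ i)
    (hf : ∀ x : ℝ, f x = ((W : ℝ) + 1) * u x ^ W / S x)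
    (hR : ∀ x : ℝ, R x = Real.exp (-(lam * T) * (1 - x)) / x - f x)
    (hQ : ∀ x : ℝ, Q x = 1 + (1 / x - r) * Real.exp (-(lam * T) * (1 - x))
        - (1 - r) * Real.exp (-(lam * σ) * (1 - x)) - f x)
    (B : ℝ) (hB : B = T + W * (r * T + (1 - r) * σ) / (2 * (1 - r))) :
    R 1 = 0 ∧ Q 1 = 0
      ∧ HasDerivAt R (-1 + lam * T + lam * W * (r * T + (1 - r) * σ) / (2 * (1 - r))) 1
      ∧ HasDerivAt Q
          (-1 + (1 - r) * lam * (T - σ) + lam * W * (r * T + (1 - r) * σ) / (2 * (1 - r))) 1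
      ∧ -1 + lam * T + lam * W * (r * T + (1 - r) * σ) / (2 * (1 - r)) = lam * B - 1 := by
  have hr : (1:ℝ) - r ≠ 0 := by linarith
  have hexp : ∀ c : ℝ, HasDerivAt (fun x : ℝ => Real.exp (-c * (1 - x))) c 1 := by
    intro c
    have h1 : HasDerivAt (fun x : ℝ => -c * (1 - x)) c 1 := by
      have h := ((hasDerivAt_id (1:ℝ)).const_sub 1).const_mul (-c)
      simpa using h
    simpa using h1.exp
  -- u
  set du : ℝ := -(lam * (r * T + (1 - r) * σ)) / (1 - r) with hdu
  have hu1 : u 1 = 1 := by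
    rw [hu]; simp [hr]
  have hU : HasDerivAt u du 1 := by
    have hnum : HasDerivAt (fun x : ℝ => 1 - r * Real.exp (-(lam * T) * (1 - x)))
        (-(r * (lam * T))) 1 := by
      have h := ((hexp (lam * T)).const_mul r).const_sub 1
      simpa using h
    have hden : HasDerivAt (fun x : ℝ => (1 - r) * Real.exp (-(lam * σ) * (1 - x)))
        ((1 - r) * (lam * σ)) 1 := (hexp (lam * σ)).const_mul (1 - r)
    have hne : (fun x : ℝ => (1 - r) * Real.exp (-(lam * σ) * (1 - x))) 1 ≠ 0 := by
      simp [hr]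
    have h := hnum.div hden hne
    have h' : HasDerivAt u
        ((-(r * (lam * T)) * ((fun x : ℝ => (1 - r) * Real.exp (-(lam * σ) * (1 - x))) 1)
          - (fun x : ℝ => 1 - r * Real.exp (-(lam * T) * (1 - x))) 1 * ((1 - r) * (lam * σ)))
          / ((fun x : ℝ => (1 - r) * Real.exp (-(lam * σ) * (1 - x))) 1) ^ 2) 1 := by
      refine h.congr_of_eventuallyEq ?_
      filter_upwards with x
      rw [hu]; rfl
    convert h' using 1
    simp only []
    rw [hdu]
    norm_num
    field_simp
    ring
  -- value of S at 1
  have hS1 : S 1 = (W : ℝ) + 1 := by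
    rw [hS]; simp [hu1]
  have hW1 : ((W : ℝ) + 1) ≠ 0 := by positivity
  -- Gauss sum
  have hgauss : (∑ i ∈ Finset.range (W + 1), (i : ℝ)) = (W * (W + 1)) / 2 := by
    have h2 := Finset.sum_range_id_mul_two (W + 1)
    have h3 : ((∑ i ∈ Finset.range (W + 1), i : ℕ) : ℝ) * 2 = ((W : ℝ) + 1) * W := by
      exact_mod_cast congrArg (Nat.cast : ℕ → ℝ) h2
    push_cast at h3 ⊢
    linarith
  -- derivative of S
  have hSder : HasDerivAt S ((W * (W + 1)) / 2 * du) 1 := by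
    have h := HasDerivAt.fun_sum (fun i (_ : i ∈ Finset.range (W + 1)) => hU.pow i)
    have h' : HasDerivAt S (∑ i ∈ Finset.range (W + 1), ((i : ℝ) * u 1 ^ (i - 1)) * du) 1 := by
      refine h.congr_of_eventuallyEq ?_
      filter_upwards with x
      rw [hS]; rfl
    convert h' using 1
    simp [hu1, ← Finset.sum_mul, hgauss]
  -- derivative of f
  have hF : HasDerivAt f (du * W / 2) 1 := by
    have hg := (hU.pow W).const_mul ((W : ℝ) + 1)
    have h := hg.div hSder (by rw [hS1]; exact hW1)
    have h' : HasDerivAt f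
        ((((W : ℝ) + 1) * ((W * u 1 ^ (W - 1)) * du) * S 1
          - ((W : ℝ) + 1) * u 1 ^ W * ((W * (W + 1)) / 2 * du)) / (S 1) ^ 2) 1 := by
      refine h.congr_of_eventuallyEq ?_
      filter_upwards with x
      rw [hf]; rfl
    convert h' using 1
    rw [hu1, hS1]
    field_simp
    ring
  have hf1 : f 1 = 1 := by
    rw [hf, hu1, hS1]
    field_simp
    simp
  -- derivative of R
  have hRder : HasDerivAt R (lam * T - 1 - du * W / 2) 1 := by
    have h1 := (hexp (lam * T)).div (hasDerivAt_id 1) one_ne_zero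
    have h := h1.sub hF
    have h' : HasDerivAt R
        ((lam * T * id 1 - Real.exp (-(lam * T) * (1 - 1)) * 1) / (id 1) ^ 2 - du * W / 2) 1 := by
      refine h.congr_of_eventuallyEq ?_
      filter_upwards with x
      rw [hR]; rfl
    convert h' using 1
    simp
  -- derivative of Q
  have hQder : HasDerivAt Q
      (-1 + (1 - r) * lam * (T - σ) - du * W / 2) 1 := by
    have hinv := (hasDerivAt_const (1:ℝ) (1:ℝ)).div (hasDerivAt_id 1) one_ne_zero
    have hmul := (hinv.sub_const r).mul (hexp (lam * T))
    have hden : HasDerivAt (fun x : ℝ => (1 - r) * Real.exp (-(lam * σ) * (1 - x)))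
        ((1 - r) * (lam * σ)) 1 := (hexp (lam * σ)).const_mul (1 - r)
    have h := ((hmul.const_add 1).sub hden).sub hF
    have h' : HasDerivAt Q
        (((0 * id 1 - 1 * 1) / (id 1) ^ 2) * Real.exp (-(lam * T) * (1 - 1))
          + (1 / id 1 - r) * (lam * T) - (1 - r) * (lam * σ) - du * W / 2) 1 := by
      refine h.congr_of_eventuallyEq ?_
      filter_upwards with x
      rw [hQ]; rfl
    convert h' using 1
    simp
    ring
  refine ⟨?_, ?_, ?_, ?_, ?_⟩
  · rw [hR]; simp [hf1]
  · rw [hQ]; simp [hf1]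
  · convert hRder using 1
    rw [hdu]
    field_simp
    ring
  · convert hQder using 1
    rw [hdu]
    field_simp
    ring
  · rw [hB]
    field_simp
    ring
end

section
/- Assume λB < 1, where B = T + W·(rT+(1−r)σ)/(2(1−r)). Let p₀₀ ∈ ℝ and let F₀ : [0,1] → ℝ be continuous and satisfy R(x)·F₀(x) = p₀₀·Q(x) for all x ∈ [0,1), together with the normalization condition F₀(1) + (W/(2(1−r)))·(F₀(1) − p₀₀) = 1. Then p₀₀ = (1 − λB)/(1 − λA + λW·(B−A)/(2(1−r))), where A = (1−r)(T−σ) + W·(rT+(1−r)σ)/(2(1−r)). -/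
open scoped BigOperators

set_option maxHeartbeats 2000000 in
/-- Under the ergodicity condition `λB < 1`, the normalization
condition determines the idle probability
`p₀₀ = (1-λB)/(1-λA+λW(B-A)/(2(1-r)))`. -/
theorem greedy_idle_probability
    (lam σ T r : ℝ) (hlam : 0 < lam) (hσ : 0 < σ) (hT : 0 < T)
    (hr0 : 0 < r) (hr1 : r < 1) (W : ℕ) (hW : 1 ≤ W)
    (u S f R Q : ℝ → ℝ)
    (hu : ∀ x : ℝ, u x
      = (1 - r * Real.exp (-(lam * T) * (1 - x))) / ((1 - r) * Real.exp (-(lam * σ) * (1 - x))))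
    (hS : ∀ x : ℝ, S x = ∑ i ∈ Finset.range (W + 1), u x ^ i)
    (hf : ∀ x : ℝ, f x = ((W : ℝ) + 1) * u x ^ W / S x)
    (hR : ∀ x : ℝ, R x = Real.exp (-(lam * T) * (1 - x)) / x - f x)
    (hQ : ∀ x : ℝ, Q x = 1 + (1 / x - r) * Real.exp (-(lam * T) * (1 - x))
        - (1 - r) * Real.exp (-(lam * σ) * (1 - x)) - f x)
    (A B : ℝ)
    (hA : A = (1 - r) * (T - σ) + W * (r * T + (1 - r) * σ) / (2 * (1 - r)))
    (hB : B = T + W * (r * T + (1 - r) * σ) / (2 * (1 - r)))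
    (hergo : lam * B < 1)
    (p00 : ℝ) (F0 : ℝ → ℝ)
    (hcont : ContinuousOn F0 (Set.Icc 0 1))
    (heq : ∀ x ∈ Set.Ico (0 : ℝ) 1, R x * F0 x = p00 * Q x)
    (hnorm : F0 1 + ((W : ℝ) / (2 * (1 - r))) * (F0 1 - p00) = 1) :
    p00 = (1 - lam * B) / (1 - lam * A + lam * W * (B - A) / (2 * (1 - r))) := by
  have hr : (0:ℝ) < 1 - r := by linarith
  have hrne : (1:ℝ) - r ≠ 0 := ne_of_gt hr
  have hW1 : ((W:ℝ) + 1) ≠ 0 := by positivity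
  set c : ℝ := -(lam * (r * T + (1 - r) * σ)) / (1 - r) with hc
  -- derivative of the exponentials at 1
  have heT : HasDerivAt (fun x : ℝ => Real.exp (-(lam*T)*(1-x))) (lam*T) 1 := by
    have h1 : HasDerivAt (fun x : ℝ => -(lam*T)*(1-x)) (lam*T) 1 := by
      have := ((hasDerivAt_id (1:ℝ)).const_sub 1).const_mul (-(lam*T))
      exact this.congr_deriv (by ring)
    simpa using h1.exp
  have heσ : HasDerivAt (fun x : ℝ => Real.exp (-(lam*σ)*(1-x))) (lam*σ) 1 := by
    have h1 : HasDerivAt (fun x : ℝ => -(lam*σ)*(1-x)) (lam*σ) 1 := by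
      have := ((hasDerivAt_id (1:ℝ)).const_sub 1).const_mul (-(lam*σ))
      exact this.congr_deriv (by ring)
    simpa using h1.exp
  -- u
  have hu1 : u 1 = 1 := by rw [hu]; simp [hrne]
  have hud : HasDerivAt u c 1 := by
    have hN : HasDerivAt (fun x : ℝ => 1 - r * Real.exp (-(lam*T)*(1-x))) (-(r*(lam*T))) 1 := by
      have := (heT.const_mul r).const_sub 1
      convert this using 1
    have hD : HasDerivAt (fun x : ℝ => (1-r) * Real.exp (-(lam*σ)*(1-x))) ((1-r)*(lam*σ)) 1 :=
      heσ.const_mul (1-r)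
    have hDne : (1-r) * Real.exp (-(lam*σ)*(1-(1:ℝ))) ≠ 0 := by
      simp [hrne]
    have h := hN.fun_div hD hDne
    have hfun : (fun x : ℝ => (1 - r * Real.exp (-(lam*T)*(1-x))) / ((1-r)*Real.exp (-(lam*σ)*(1-x)))) = u :=
      funext fun x => (hu x).symm
    rw [hfun] at h
    refine h.congr_deriv ?_
    simp only [sub_self, mul_zero, neg_zero, Real.exp_zero, mul_one]
    rw [hc]
    field_simp
    ring
  -- S
  have hS1 : S 1 = (W:ℝ) + 1 := by
    rw [hS]; simp [hu1]
  have hSsum : (∑ i ∈ Finset.range (W + 1), (i:ℝ)) = W*(W+1)/2 := by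
    have h := Finset.sum_range_id_mul_two (W+1)
    have h2 : ((∑ i ∈ Finset.range (W+1), i : ℕ) : ℝ) * 2 = ((W+1) * W : ℕ) := by
      exact_mod_cast congrArg (Nat.cast (R := ℝ)) h
    push_cast at h2
    linarith
  have hSd : HasDerivAt S (c * (W*(W+1)/2)) 1 := by
    have h : HasDerivAt (fun x => ∑ i ∈ Finset.range (W+1), u x ^ i)
        (∑ i ∈ Finset.range (W+1), (i:ℝ) * u 1 ^ (i-1) * c) 1 :=
      HasDerivAt.fun_sum fun i _ => hud.fun_pow i
    have hfun : (fun x => ∑ i ∈ Finset.range (W+1), u x ^ i) = S := funext fun x => (hS x).symm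
    rw [hfun] at h
    convert h using 1
    simp only [hu1, one_pow, mul_one]
    rw [← Finset.sum_mul, hSsum]; ring
  -- f
  have hf1 : f 1 = 1 := by
    rw [hf, hu1, hS1]; simp; exact hW1
  have hfd : HasDerivAt f (c*W/2) 1 := by
    have hg : HasDerivAt (fun x => ((W:ℝ)+1) * u x ^ W) (((W:ℝ)+1) * ((W:ℝ) * u 1 ^ (W-1) * c)) 1 :=
      (hud.pow W).const_mul _
    have h := hg.fun_div hSd (by rw [hS1]; exact hW1)
    have hfun : (fun x => ((W:ℝ)+1) * u x ^ W / S x) = f := funext fun x => (hf x).symm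
    rw [hfun] at h
    refine h.congr_deriv ?_
    rw [hu1, hS1]
    simp only [one_pow, mul_one]
    field_simp
    ring
  -- R and Q derivatives
  have hone : (1:ℝ) ≠ 0 := one_ne_zero
  have hRd : HasDerivAt R (lam*B - 1) 1 := by
    have h1 : HasDerivAt (fun x : ℝ => Real.exp (-(lam*T)*(1-x)) / x)
        ((lam*T * 1 - Real.exp (-(lam*T)*(1-(1:ℝ))) * 1) / (1:ℝ)^2) 1 :=
      heT.div (hasDerivAt_id 1) hone
    have h := h1.fun_sub hfd
    have hfun : (fun x : ℝ => Real.exp (-(lam*T)*(1-x)) / x - f x) = R := funext fun x => (hR x).symm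
    rw [hfun] at h
    refine h.congr_deriv ?_
    simp only [sub_self, mul_zero, neg_zero, Real.exp_zero]
    rw [hB, hc]
    field_simp
    ring
  have hQd : HasDerivAt Q (lam*A - 1) 1 := by
    have hinv : HasDerivAt (fun x : ℝ => 1/x - r) (-1) 1 := by
      have := (hasDerivAt_inv hone).sub_const r
      simp only [one_div]
      exact this.congr_deriv (by norm_num)
    have h1 : HasDerivAt (fun x : ℝ => (1/x - r) * Real.exp (-(lam*T)*(1-x)))
        ((-1) * Real.exp (-(lam*T)*(1-(1:ℝ))) + (1/1 - r) * (lam*T)) 1 := hinv.mul heT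
    have h2 := ((h1.const_add 1).fun_sub (heσ.const_mul (1-r))).fun_sub hfd
    have hfun : (fun x : ℝ => 1 + (1/x - r) * Real.exp (-(lam*T)*(1-x))
        - (1-r) * Real.exp (-(lam*σ)*(1-x)) - f x) = Q := funext fun x => (hQ x).symm
    rw [hfun] at h2
    refine h2.congr_deriv ?_
    simp only [sub_self, mul_zero, neg_zero, Real.exp_zero]
    rw [hA, hc]
    field_simp
    ring
  have hR1 : R 1 = 0 := by rw [hR]; simp [hf1]
  have hQ1 : Q 1 = 0 := by rw [hQ]; simp [hf1]
  -- limits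
  have hdRne : lam*B - 1 ≠ 0 := by nlinarith
  have hRslope : Filter.Tendsto (fun y => R y / (y - 1)) (nhdsWithin 1 {(1:ℝ)}ᶜ) (nhds (lam*B-1)) := by
    have h := hasDerivAt_iff_tendsto_slope.mp hRd
    have : (fun y => R y / (y-1)) = slope R 1 := by
      funext y; rw [slope_def_field, hR1, sub_zero]
    rw [this]; exact h
  have hQslope : Filter.Tendsto (fun y => Q y / (y - 1)) (nhdsWithin 1 {(1:ℝ)}ᶜ) (nhds (lam*A-1)) := by
    have h := hasDerivAt_iff_tendsto_slope.mp hQd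
    have : (fun y => Q y / (y-1)) = slope Q 1 := by
      funext y; rw [slope_def_field, hQ1, sub_zero]
    rw [this]; exact h
  set l : Filter ℝ := nhdsWithin 1 (Set.Ioo 0 1) with hl
  have hle1 : l ≤ nhdsWithin 1 {(1:ℝ)}ᶜ :=
    nhdsWithin_mono 1 (fun y hy => ne_of_lt hy.2)
  have hle2 : l ≤ nhdsWithin 1 (Set.Icc 0 1) :=
    nhdsWithin_mono 1 Set.Ioo_subset_Icc_self
  have hlne : l.NeBot := by
    have h1 : (1:ℝ) ∈ closure (Set.Ioo (0:ℝ) 1) := by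
      rw [closure_Ioo (by norm_num : (0:ℝ) ≠ 1)]
      exact Set.right_mem_Icc.mpr (by norm_num)
    exact mem_closure_iff_nhdsWithin_neBot.mp h1
  have htR := hRslope.mono_left hle1
  have htQ := hQslope.mono_left hle1
  have hdiv : Filter.Tendsto (fun y => p00 * ((Q y/(y-1))/(R y/(y-1)))) l
      (nhds (p00 * ((lam*A-1)/(lam*B-1)))) :=
    Filter.Tendsto.const_mul p00 (htQ.div htR hdRne)
  have hne : ∀ᶠ y in l, R y/(y-1) ≠ 0 := htR.eventually_ne hdRne
  have hFev : ∀ᶠ y in l, F0 y = p00 * ((Q y/(y-1))/(R y/(y-1))) := by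
    filter_upwards [hne, self_mem_nhdsWithin] with y h1 hy
    have hy1 : y - 1 ≠ 0 := sub_ne_zero.mpr (ne_of_lt hy.2)
    have hRy : R y ≠ 0 := fun h => h1 (by simp [h])
    have hmain := heq y ⟨le_of_lt hy.1, hy.2⟩
    field_simp
    linarith [hmain]
  have hF0lim : Filter.Tendsto F0 l (nhds (F0 1)) :=
    (hcont 1 (Set.right_mem_Icc.mpr (by norm_num))).mono_left hle2
  have hF0lim2 : Filter.Tendsto F0 l (nhds (p00 * ((lam*A-1)/(lam*B-1)))) :=
    hdiv.congr' (Filter.EventuallyEq.symm hFev)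
  have key : F0 1 = p00 * ((lam*A-1)/(lam*B-1)) := tendsto_nhds_unique hF0lim hF0lim2
  -- final algebra
  have hP : p00 * (1 - lam*A + lam*W*(B-A)/(2*(1-r))) = 1 - lam*B := by
    rw [key] at hnorm
    field_simp at hnorm ⊢
    nlinarith [hnorm]
  have hdenne : (1 - lam*A + lam*W*(B-A)/(2*(1-r))) ≠ 0 := by
    intro h
    rw [h, mul_zero] at hP
    linarith
  rw [eq_div_iff hdenne]
  exact hP
end

section
/- For every complex x with |x| ≤ 1, one has |u(x)| ≥ 1, where u(x) = exp(λσ(1−x))·(1 − r·exp(−λT(1−x)))/(1−r). -/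
/-- For `|x| ≤ 1`, the modulus of
`u(x) = exp(λσ(1-x))·(1 - r·exp(-λT(1-x)))/(1-r)` is at least `1`. -/
theorem abs_u_ge_one_on_unit_disk
    (lam σ T r : ℝ) (hlam : 0 < lam) (hσ : 0 < σ) (hT : 0 < T)
    (hr0 : 0 ≤ r) (hr1 : r < 1)
    (x : ℂ) (hx : ‖x‖ ≤ 1) :
    1 ≤ ‖
      (Complex.exp ((lam : ℂ) * σ * (1 - x))
        * (1 - (r : ℂ) * Complex.exp (-((lam : ℂ) * T) * (1 - x))) / (1 - (r : ℂ)))‖ := by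
  have hre : x.re ≤ 1 := (Complex.re_le_norm x).trans hx
  have hs : 0 ≤ (1 - x).re := by simp [Complex.sub_re]; linarith
  have hA : (1 : ℝ) ≤ ‖Complex.exp ((lam : ℂ) * σ * (1 - x))‖ := by
    rw [Complex.norm_exp]
    refine Real.one_le_exp ?_
    have : ((lam : ℂ) * σ * (1 - x)).re = lam * σ * (1 - x).re := by
      simp [Complex.mul_re, Complex.ofReal_re, Complex.ofReal_im]
    rw [this]
    positivity
  have hB : 1 - r ≤ ‖1 - (r : ℂ) * Complex.exp (-((lam : ℂ) * T) * (1 - x))‖ := by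
    have h1 : ‖(r : ℂ) * Complex.exp (-((lam : ℂ) * T) * (1 - x))‖ ≤ r := by
      rw [norm_mul, Complex.norm_real, Real.norm_eq_abs, abs_of_nonneg hr0, Complex.norm_exp]
      have : (-((lam : ℂ) * T) * (1 - x)).re = -(lam * T) * (1 - x).re := by
        simp [Complex.mul_re, Complex.ofReal_re, Complex.ofReal_im]
      rw [this]
      have : Real.exp (-(lam * T) * (1 - x).re) ≤ 1 := by
        apply Real.exp_le_one_iff.mpr
        nlinarith [mul_nonneg (mul_nonneg hlam.le hT.le) hs]
      nlinarith
    calc 1 - r ≤ ‖(1 : ℂ)‖ - ‖(r : ℂ) * Complex.exp (-((lam : ℂ) * T) * (1 - x))‖ := by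
            simp only [norm_one]; linarith
      _ ≤ _ := by
        have := norm_sub_norm_le (1 : ℂ) ((r : ℂ) * Complex.exp (-((lam : ℂ) * T) * (1 - x)))
        linarith
  have hr1' : (0:ℝ) < 1 - r := by linarith
  rw [norm_div, norm_mul]
  have habs : ‖1 - (r : ℂ)‖ = 1 - r := by
    rw [show (1 - (r:ℂ)) = ((1 - r : ℝ) : ℂ) by push_cast; ring, Complex.norm_real, Real.norm_eq_abs,
      abs_of_pos hr1']
  rw [habs, le_div_iff₀ hr1', one_mul]
  calc 1 - r = 1 * (1 - r) := by ring
    _ ≤ _ := by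
        apply mul_le_mul hA hB (le_of_lt hr1') (le_trans zero_le_one hA)
end

section
/- For every complex x with |x| = 1 and x ≠ 1, the strict inequality |g(x)| < |h(x)| holds, where g(x) = exp(−λT(1−x))·∑_{i=0}^{W} u(x)^i and h(x) = (W+1)·x·u(x)^W. -/
open scoped BigOperators

/-- On the unit circle, away from `x = 1`, the strict inequality
`|g(x)| < |h(x)|` holds, where `g(x) = exp(-λT(1-x))·∑_{i=0}^{W} u(x)^i` and
`h(x) = (W+1)·x·u(x)^W`. -/
theorem abs_g_lt_abs_h_on_unit_circle
    (lam σ T r : ℝ) (hlam : 0 < lam) (hσ : 0 < σ) (hT : 0 < T)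
    (hr0 : 0 ≤ r) (hr1 : r < 1) (W : ℕ) (hW : 1 ≤ W)
    (a b : ℂ → ℂ) (u g h : ℂ → ℂ)
    (ha : ∀ x : ℂ, a x = (1 - (r : ℂ)) * Complex.exp (-((lam : ℂ) * σ) * (1 - x)))
    (hb : ∀ x : ℂ, b x = 1 - (r : ℂ) * Complex.exp (-((lam : ℂ) * T) * (1 - x)))
    (hu : ∀ x : ℂ, u x = b x / a x)
    (hg : ∀ x : ℂ, g x
      = Complex.exp (-((lam : ℂ) * T) * (1 - x)) * ∑ i ∈ Finset.range (W + 1), u x ^ i)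
    (hh : ∀ x : ℂ, h x = ((W : ℂ) + 1) * x * u x ^ W)
    (x : ℂ) (hx : ‖x‖ = 1) (hx1 : x ≠ 1) :
    ‖g x‖ < ‖h x‖ := by
  -- Re x < 1
  have hnormSq : x.re * x.re + x.im * x.im = 1 := by
    have h1 := Complex.sq_norm x
    rw [hx] at h1
    have := h1.symm
    simpa [Complex.normSq_apply] using this
  have hxre : x.re < 1 := by
    rcases lt_or_eq_of_le (le_trans (Complex.re_le_norm x) (le_of_eq hx)) with h1 | h1
    · exact h1
    · exfalso
      apply hx1
      have him : x.im = 0 := by nlinarith [sq_nonneg x.im]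
      apply Complex.ext <;> simp [h1, him]
  set c : ℝ := 1 - x.re with hcdef
  have hc : 0 < c := by simp [hcdef]; linarith
  -- modulus of the exponentials
  have hexp : ∀ t : ℝ, ‖Complex.exp (-((t : ℂ)) * (1 - x))‖
      = Real.exp (-t * c) := by
    intro t
    rw [Complex.norm_exp]
    congr 1
    simp [Complex.mul_re, Complex.sub_re, Complex.sub_im, hcdef]
  have hexpσ : ‖Complex.exp (-((lam : ℂ) * σ) * (1 - x))‖
      = Real.exp (-(lam * σ) * c) := by
    have := hexp (lam * σ)
    simpa using this
  have hexpT : ‖Complex.exp (-((lam : ℂ) * T) * (1 - x))‖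
      = Real.exp (-(lam * T) * c) := by
    have := hexp (lam * T)
    simpa using this
  have hexpσlt : Real.exp (-(lam * σ) * c) < 1 := by
    rw [Real.exp_lt_one_iff]
    nlinarith [mul_pos (mul_pos hlam hσ) hc]
  have hexpTlt : Real.exp (-(lam * T) * c) < 1 := by
    rw [Real.exp_lt_one_iff]
    nlinarith [mul_pos (mul_pos hlam hT) hc]
  -- |a x| < 1 - r
  have habs_a : ‖a x‖ = (1 - r) * Real.exp (-(lam * σ) * c) := by
    rw [ha, norm_mul, hexpσ]
    congr 1
    have : (1 : ℂ) - (r : ℂ) = ((1 - r : ℝ) : ℂ) := by push_cast; ring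
    rw [this, Complex.norm_real, Real.norm_eq_abs, abs_of_nonneg (by linarith)]
  have ha_lt : ‖a x‖ < 1 - r := by
    rw [habs_a]
    nlinarith [Real.exp_pos (-(lam * σ) * c)]
  have ha_pos : 0 < ‖a x‖ := by
    rw [habs_a]
    have h1r : (0:ℝ) < 1 - r := by linarith
    positivity
  -- |b x| ≥ 1 - r
  have hb_ge : 1 - r ≤ ‖b x‖ := by
    rw [hb]
    have h2 : ‖(1 : ℂ)‖ - ‖(r : ℂ) * Complex.exp (-((lam : ℂ) * T) * (1 - x))‖
        ≤ ‖1 - (r : ℂ) * Complex.exp (-((lam : ℂ) * T) * (1 - x))‖ := by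
      exact norm_sub_norm_le _ _
    have h3 : ‖(r : ℂ) * Complex.exp (-((lam : ℂ) * T) * (1 - x))‖ ≤ r := by
      rw [norm_mul, hexpT, Complex.norm_real, Real.norm_eq_abs, abs_of_nonneg hr0]
      nlinarith [Real.exp_pos (-(lam * T) * c)]
    simp only [norm_one] at h2
    linarith
  -- |u x| > 1
  have hu_gt : 1 < ‖u x‖ := by
    rw [hu, norm_div]
    rw [lt_div_iff₀ ha_pos, one_mul]
    calc ‖a x‖ < 1 - r := ha_lt
    _ ≤ ‖b x‖ := hb_ge
  have hu_pos : 0 < ‖u x‖ := by linarith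
  -- bound the sum
  have hsum : ‖∑ i ∈ Finset.range (W + 1), u x ^ i‖
      ≤ ((W : ℝ) + 1) * ‖u x‖ ^ W := by
    calc ‖∑ i ∈ Finset.range (W + 1), u x ^ i‖
        ≤ ∑ i ∈ Finset.range (W + 1), ‖u x ^ i‖ :=
          norm_sum_le _ _
      _ ≤ ∑ i ∈ Finset.range (W + 1), ‖u x‖ ^ W := by
          apply Finset.sum_le_sum
          intro i hi
          rw [norm_pow]
          exact pow_le_pow_right₀ (le_of_lt hu_gt) (Nat.lt_succ_iff.mp (Finset.mem_range.mp hi))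
      _ = ((W : ℝ) + 1) * ‖u x‖ ^ W := by
          rw [Finset.sum_const, Finset.card_range]
          push_cast
          ring
  -- |h x|
  have hh_abs : ‖h x‖ = ((W : ℝ) + 1) * ‖u x‖ ^ W := by
    rw [hh, norm_mul, norm_mul, hx, norm_pow]
    have : ‖(W : ℂ) + 1‖ = (W : ℝ) + 1 := by
      have : ((W : ℂ) + 1) = (((W : ℝ) + 1 : ℝ) : ℂ) := by push_cast; ring
      rw [this, Complex.norm_real, Real.norm_eq_abs, abs_of_nonneg (by positivity)]
    rw [this]
    ring
  -- conclude
  rw [hg, norm_mul, hexpT, hh_abs]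
  have hWpos : 0 < ((W : ℝ) + 1) * ‖u x‖ ^ W := by positivity
  calc Real.exp (-(lam * T) * c) * ‖∑ i ∈ Finset.range (W + 1), u x ^ i‖
      ≤ Real.exp (-(lam * T) * c) * (((W : ℝ) + 1) * ‖u x‖ ^ W) := by
        apply mul_le_mul_of_nonneg_left hsum (le_of_lt (Real.exp_pos _))
    _ < 1 * (((W : ℝ) + 1) * ‖u x‖ ^ W) := by
        apply mul_lt_mul_of_pos_right hexpTlt hWpos
    _ = ((W : ℝ) + 1) * ‖u x‖ ^ W := by ring
end

section
/- Assume λB < 1, where B = T + W·(rT+(1−r)σ)/(2(1−r)); equivalently, λ < 1/( T·(1 + rW/(2(1−r))) + Wσ/2 ). Then for every complex x with |x| ≤ 1 and x ≠ 1, one has exp(−λT(1−x))·∑_{i=0}^{W} u(x)^i ≠ (W+1)·x·u(x)^W; in other words, x=1 is the only solution of g(x)=h(x) in the closed unit disk. -/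
lemma abs_exp_neg_sub_one_le (w : ℂ) (hw : 0 ≤ w.re) :
    ‖Complex.exp (-w) - 1‖ ≤ ‖w‖ := by
  set p := w.re with hp
  set q := w.im with hq
  have hep0 : 0 < Real.exp (-p) := Real.exp_pos _
  have hep1 : Real.exp (-p) ≤ 1 := Real.exp_le_one_iff.mpr (by linarith)
  have h1 : 1 - Real.exp (-p) ≤ p := by nlinarith [Real.add_one_le_exp (-p)]
  have hcos : 1 - q ^ 2 / 2 ≤ Real.cos q := Real.one_sub_sq_div_two_le_cos
  have hcos1 : Real.cos q ≤ 1 := Real.cos_le_one q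
  have key : ‖Complex.exp (-w) - 1‖ ^ 2 ≤ ‖w‖ ^ 2 := by
    rw [Complex.sq_norm, Complex.sq_norm]
    have hre : (Complex.exp (-w) - 1).re = Real.exp (-p) * Real.cos q - 1 := by
      simp [Complex.exp_re, Real.cos_neg, hp, hq]
    have him : (Complex.exp (-w) - 1).im = -(Real.exp (-p) * Real.sin q) := by
      simp [Complex.exp_im, Real.sin_neg, hp, hq]
    rw [Complex.normSq_apply, Complex.normSq_apply, hre, him]
    have hpy : Real.sin q ^ 2 + Real.cos q ^ 2 = 1 := Real.sin_sq_add_cos_sq q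
    nlinarith [sq_nonneg (Real.exp (-p)), sq_nonneg q, sq_nonneg (1 - Real.exp (-p))]
  have := Real.sqrt_le_sqrt key
  rwa [Real.sqrt_sq (norm_nonneg _), Real.sqrt_sq (norm_nonneg _)] at this

lemma exp_facts (c : ℝ) (hc : 0 ≤ c) (s : ℂ) (hs : 0 ≤ s.re) :
    ‖Complex.exp (-(c : ℂ) * s) - 1‖ ≤ c * ‖s‖ ∧
      ‖Complex.exp (-(c : ℂ) * s)‖ ≤ 1 := by
  have hre : ((c : ℂ) * s).re = c * s.re := by simp [Complex.mul_re]
  constructor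
  · have h := abs_exp_neg_sub_one_le ((c : ℂ) * s) (by rw [hre]; positivity)
    rw [neg_mul]
    calc ‖Complex.exp (-((c:ℂ) * s)) - 1‖ ≤ ‖(c:ℂ) * s‖ := h
      _ = c * ‖s‖ := by
          rw [norm_mul, Complex.norm_real, Real.norm_eq_abs, abs_of_nonneg hc]
  · rw [Complex.norm_exp]
    apply Real.exp_le_one_iff.mpr
    simp [Complex.neg_re, hre]
    positivity

lemma gauss_real (n : ℕ) : ∑ j ∈ Finset.range (n + 1), (j : ℝ) = n * (n + 1) / 2 := by
  induction n with
  | zero => simp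
  | succ m ih =>
    rw [Finset.sum_range_succ, ih]
    push_cast
    ring

open scoped BigOperators

set_option maxHeartbeats 1000000 in
/-- Under the ergodicity condition `λB < 1`, the point `x = 1` is
the only solution of `g(x) = h(x)` in the closed unit disk. -/
theorem greedy_no_other_zero_in_disk
    (lam σ T r : ℝ) (hlam : 0 < lam) (hσ : 0 < σ) (hT : 0 < T)
    (hr0 : 0 < r) (hr1 : r < 1) (W : ℕ) (hW : 1 ≤ W)
    (B : ℝ) (hB : B = T + W * (r * T + (1 - r) * σ) / (2 * (1 - r)))
    (hergo : lam * B < 1)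
    (a b : ℂ → ℂ) (u : ℂ → ℂ)
    (ha : ∀ x : ℂ, a x = (1 - (r : ℂ)) * Complex.exp (-((lam : ℂ) * σ) * (1 - x)))
    (hb : ∀ x : ℂ, b x = 1 - (r : ℂ) * Complex.exp (-((lam : ℂ) * T) * (1 - x)))
    (hu : ∀ x : ℂ, u x = b x / a x)
    (x : ℂ) (hx : ‖x‖ ≤ 1) (hx1 : x ≠ 1) :
    Complex.exp (-((lam : ℂ) * T) * (1 - x)) * ∑ i ∈ Finset.range (W + 1), u x ^ i
      ≠ ((W : ℂ) + 1) * x * u x ^ W := by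
  intro heq
  have h1r : (0:ℝ) < 1 - r := by linarith
  set s : ℂ := 1 - x with hs_def
  have hsre : 0 ≤ s.re := by
    have h1 : x.re ≤ ‖x‖ := Complex.re_le_norm x
    have : s.re = 1 - x.re := by simp [hs_def]
    linarith
  have hsne : s ≠ 0 := sub_ne_zero.mpr (Ne.symm hx1)
  set A : ℝ := ‖s‖ with hA_def
  have hA : 0 < A := norm_pos_iff.mpr hsne
  set z : ℂ := Complex.exp (-((lam : ℂ) * T) * (1 - x)) with hz_def
  set y : ℂ := Complex.exp (-((lam : ℂ) * σ) * (1 - x)) with hy_def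
  have hzeq : Complex.exp (-((lam * T : ℝ) : ℂ) * s) = z := by
    rw [hz_def]; congr 1; push_cast; ring
  have hyeq : Complex.exp (-((lam * σ : ℝ) : ℂ) * s) = y := by
    rw [hy_def]; congr 1; push_cast; ring
  have hzf := exp_facts (lam * T) (by positivity) s hsre
  have hyf := exp_facts (lam * σ) (by positivity) s hsre
  rw [hzeq] at hzf
  rw [hyeq] at hyf
  obtain ⟨hzd, hz1⟩ := hzf
  obtain ⟨hyd, hy1⟩ := hyf
  -- b x ≠ 0, a x ≠ 0
  have hbx : b x = 1 - (r : ℂ) * z := hb x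
  have hax : a x = (1 - (r : ℂ)) * y := ha x
  have habs_b : 1 - r ≤ ‖b x‖ := by
    have h1 : ‖(r : ℂ) * z‖ ≤ r := by
      rw [norm_mul, Complex.norm_real, Real.norm_eq_abs, abs_of_nonneg hr0.le]
      nlinarith
    have h2 : (1:ℝ) ≤ ‖b x‖ + ‖(r:ℂ) * z‖ := by
      have := norm_add_le (b x) ((r:ℂ) * z)
      have hsum : b x + (r:ℂ) * z = 1 := by rw [hbx]; ring
      rw [hsum] at this
      simpa using this
    linarith
  have hbne : b x ≠ 0 := by
    intro h; rw [h] at habs_b; simp at habs_b; linarith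
  have habs_a : ‖a x‖ ≤ 1 - r := by
    rw [hax, norm_mul]
    have : ‖1 - (r:ℂ)‖ = 1 - r := by
      rw [show (1 - (r:ℂ)) = ((1 - r : ℝ) : ℂ) by push_cast; ring,
        Complex.norm_real, Real.norm_eq_abs, abs_of_nonneg h1r.le]
    rw [this]
    nlinarith
  have hane : a x ≠ 0 := by
    rw [hax]
    exact mul_ne_zero (by
      intro h
      have : (r:ℂ) = 1 := by linear_combination -h
      exact (by exact_mod_cast hr1.ne : (r:ℂ) ≠ 1) this) (Complex.exp_ne_zero _)
  have hune : u x ≠ 0 := by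
    rw [hu x]; exact div_ne_zero hbne hane
  set v : ℂ := a x / b x with hv_def
  have huv : u x * v = 1 := by
    rw [hu x, hv_def]; field_simp
  have hv1 : ‖v‖ ≤ 1 := by
    rw [hv_def, norm_div]
    rw [div_le_one (by linarith)]
    linarith
  -- bound on |v - 1|
  set E : ℝ := lam * σ + r * (lam * T) / (1 - r) with hE_def
  have hE0 : 0 ≤ E := by positivity
  have hvd : ‖v - 1‖ ≤ E * A := by
    have hnum : a x - b x = (1 - (r:ℂ)) * (y - 1) + (r:ℂ) * (z - 1) := by
      rw [hax, hbx]; ring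
    have habnum : ‖a x - b x‖ ≤ (1 - r) * (lam * σ * A) + r * (lam * T * A) := by
      rw [hnum]
      calc ‖(1 - (r:ℂ)) * (y - 1) + (r:ℂ) * (z - 1)‖
          ≤ ‖(1 - (r:ℂ)) * (y - 1)‖ + ‖(r:ℂ) * (z - 1)‖ :=
            norm_add_le _ _
        _ ≤ (1 - r) * (lam * σ * A) + r * (lam * T * A) := by
            rw [norm_mul, norm_mul]
            have e1 : ‖1 - (r:ℂ)‖ = 1 - r := by
              rw [show (1 - (r:ℂ)) = ((1 - r : ℝ) : ℂ) by push_cast; ring,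
                Complex.norm_real, Real.norm_eq_abs, abs_of_nonneg h1r.le]
            have e2 : ‖(r:ℂ)‖ = r := by
              rw [Complex.norm_real, Real.norm_eq_abs, abs_of_nonneg hr0.le]
            rw [e1, e2]
            have := norm_nonneg (y - 1)
            have := norm_nonneg (z - 1)
            nlinarith
    have hveq : v - 1 = (a x - b x) / b x := by
      rw [hv_def]; field_simp
    rw [hveq, norm_div]
    rw [div_le_iff₀ (by linarith : (0:ℝ) < ‖b x‖)]
    calc ‖a x - b x‖ ≤ (1 - r) * (lam * σ * A) + r * (lam * T * A) := habnum
      _ = (E * A) * (1 - r) := by rw [hE_def]; field_simp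
      _ ≤ E * A * ‖b x‖ :=
          mul_le_mul_of_nonneg_left habs_b (by positivity)
  -- transform the equation
  have hvpow : ∀ i ∈ Finset.range (W + 1), u x ^ i * v ^ W = v ^ (W - i) := by
    intro i hi
    have hiW : i ≤ W := Nat.lt_succ_iff.mp (Finset.mem_range.mp hi)
    have : v ^ W = v ^ i * v ^ (W - i) := by
      rw [← pow_add, Nat.add_sub_cancel' hiW]
    rw [this, ← mul_assoc, ← mul_pow, huv, one_pow, one_mul]
  have heq2 : z * ∑ j ∈ Finset.range (W + 1), v ^ j = ((W : ℂ) + 1) * x := by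
    have h4 : (z * ∑ i ∈ Finset.range (W + 1), u x ^ i) * v ^ W
        = (((W : ℂ) + 1) * x * u x ^ W) * v ^ W := by rw [heq]
    have h5 : (∑ i ∈ Finset.range (W + 1), u x ^ i) * v ^ W
        = ∑ j ∈ Finset.range (W + 1), v ^ j := by
      rw [Finset.sum_mul]
      rw [Finset.sum_congr rfl hvpow]
      have := Finset.sum_range_reflect (fun j => v ^ j) (W + 1)
      simpa using this
    have h6 : u x ^ W * v ^ W = 1 := by rw [← mul_pow, huv, one_pow]
    calc z * ∑ j ∈ Finset.range (W + 1), v ^ j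
        = (z * ∑ i ∈ Finset.range (W + 1), u x ^ i) * v ^ W := by rw [mul_assoc, h5]
      _ = (((W : ℂ) + 1) * x * u x ^ W) * v ^ W := h4
      _ = ((W : ℂ) + 1) * x * (u x ^ W * v ^ W) := by ring
      _ = ((W : ℂ) + 1) * x := by rw [h6, mul_one]
  -- per-term bound
  have hterm : ∀ j : ℕ, ‖z * v ^ j - 1‖ ≤ lam * T * A + j * (E * A) := by
    intro j
    have hvj : ‖v ^ j‖ ≤ 1 := by
      rw [norm_pow]; exact pow_le_one₀ (norm_nonneg v) hv1
    have hsplit : z * v ^ j - 1 = (z - 1) * v ^ j + (v ^ j - 1) := by ring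
    have hgeom : ‖v ^ j - 1‖ ≤ j * ‖v - 1‖ := by
      have h7 : (∑ k ∈ Finset.range j, v ^ k) * (v - 1) = v ^ j - 1 := geom_sum_mul v j
      rw [← h7, norm_mul]
      have h8 : ‖∑ k ∈ Finset.range j, v ^ k‖ ≤ j := by
        calc ‖∑ k ∈ Finset.range j, v ^ k‖
            ≤ ∑ k ∈ Finset.range j, ‖v ^ k‖ :=
              norm_sum_le _ _
          _ ≤ ∑ k ∈ Finset.range j, (1:ℝ) := by
              apply Finset.sum_le_sum
              intro k _
              rw [norm_pow]; exact pow_le_one₀ (norm_nonneg v) hv1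
          _ = j := by simp
      have := norm_nonneg (v - 1)
      nlinarith
    calc ‖z * v ^ j - 1‖
        ≤ ‖(z - 1) * v ^ j‖ + ‖v ^ j - 1‖ := by
          rw [hsplit]; exact norm_add_le _ _
      _ ≤ lam * T * A + j * (E * A) := by
          rw [norm_mul]
          have h9 : ‖z - 1‖ * ‖v ^ j‖ ≤ lam * T * A := by
            have := norm_nonneg (z - 1)
            nlinarith
          have h10 : (j:ℝ) * ‖v - 1‖ ≤ j * (E * A) := by
            have : (0:ℝ) ≤ (j:ℝ) := Nat.cast_nonneg j
            nlinarith
          linarith [hgeom]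
  -- sum up
  have hmain : ((W:ℝ) + 1) * A ≤ ((W:ℝ) + 1) * (lam * T * A) + ((W:ℝ) * ((W:ℝ)+1) / 2) * (E * A) := by
    have hsum1 : ((W:ℂ) + 1) * x - ((W:ℂ) + 1)
        = ∑ j ∈ Finset.range (W + 1), (z * v ^ j - 1) := by
      rw [Finset.sum_sub_distrib, ← Finset.mul_sum, heq2, Finset.sum_const,
        Finset.card_range]
      push_cast
      ring
    have habs1 : ‖((W:ℂ) + 1) * x - ((W:ℂ) + 1)‖ = ((W:ℝ) + 1) * A := by
      have : ((W:ℂ) + 1) * x - ((W:ℂ) + 1) = -(((W:ℂ) + 1) * s) := by rw [hs_def]; ring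
      rw [this, norm_neg, norm_mul]
      congr 1
      rw [show ((W:ℂ) + 1) = (((W:ℝ) + 1 : ℝ) : ℂ) by push_cast; ring,
        Complex.norm_real, Real.norm_eq_abs, abs_of_nonneg (by positivity)]
    have hsumbound : ‖∑ j ∈ Finset.range (W + 1), (z * v ^ j - 1)‖
        ≤ ∑ j ∈ Finset.range (W + 1), (lam * T * A + j * (E * A)) := by
      calc ‖∑ j ∈ Finset.range (W + 1), (z * v ^ j - 1)‖
          ≤ ∑ j ∈ Finset.range (W + 1), ‖z * v ^ j - 1‖ :=
            norm_sum_le _ _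
        _ ≤ ∑ j ∈ Finset.range (W + 1), (lam * T * A + j * (E * A)) :=
            Finset.sum_le_sum (fun j _ => hterm j)
    have hsum2 : ∑ j ∈ Finset.range (W + 1), (lam * T * A + (j:ℝ) * (E * A))
        = ((W:ℝ) + 1) * (lam * T * A) + ((W:ℝ) * ((W:ℝ)+1) / 2) * (E * A) := by
      rw [Finset.sum_add_distrib, Finset.sum_const, Finset.card_range,
        ← Finset.sum_mul, gauss_real W]
      push_cast
      ring
    rw [← habs1]
    calc ‖((W:ℂ) + 1) * x - ((W:ℂ) + 1)‖
        = ‖∑ j ∈ Finset.range (W + 1), (z * v ^ j - 1)‖ := by rw [hsum1]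
      _ ≤ ∑ j ∈ Finset.range (W + 1), (lam * T * A + j * (E * A)) := hsumbound
      _ = ((W:ℝ) + 1) * (lam * T * A) + ((W:ℝ) * ((W:ℝ)+1) / 2) * (E * A) := hsum2
  -- final contradiction
  have hBE : ((W:ℝ) + 1) * (lam * T) + ((W:ℝ) * ((W:ℝ)+1) / 2) * E = ((W:ℝ) + 1) * (lam * B) := by
    rw [hB, hE_def]
    field_simp
    ring
  have hfin : ((W:ℝ) + 1) * A ≤ ((W:ℝ) + 1) * (lam * B) * A := by
    calc ((W:ℝ) + 1) * A ≤ ((W:ℝ) + 1) * (lam * T * A) + ((W:ℝ) * ((W:ℝ)+1) / 2) * (E * A) := hmain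
      _ = (((W:ℝ) + 1) * (lam * T) + ((W:ℝ) * ((W:ℝ)+1) / 2) * E) * A := by ring
      _ = ((W:ℝ) + 1) * (lam * B) * A := by rw [hBE]
  have hW1 : (0:ℝ) < (W:ℝ) + 1 := by positivity
  nlinarith [mul_pos (show (0:ℝ) < 1 - lam * B by linarith) (mul_pos hW1 hA)]
end

section
/- Assume λB > 1, where B = T + W·(rT+(1−r)σ)/(2(1−r)). Then there exists a complex number x with |x| < 1 and x ≠ 1 such that exp(−λT(1−x))·∑_{i=0}^{W} u(x)^i = (W+1)·x·u(x)^W; in other words, g−h has a zero in the open unit disk different from 1. -/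
open scoped BigOperators

noncomputable def vR (lam σ T r x : ℝ) : ℝ :=
  (1 - r * Real.exp (-(lam * T) * (1 - x))) / ((1 - r) * Real.exp (-(lam * σ) * (1 - x)))

noncomputable def fR (lam σ T r : ℝ) (W : ℕ) (x : ℝ) : ℝ :=
  Real.exp (-(lam * T) * (1 - x)) * ∑ i ∈ Finset.range (W + 1), vR lam σ T r x ^ i
    - ((W : ℝ) + 1) * x * vR lam σ T r x ^ W

lemma expAux (c : ℝ) : HasDerivAt (fun x : ℝ => Real.exp (-c * (1 - x))) c 1 := by
  have h1 : HasDerivAt (fun x : ℝ => -c * (1 - x)) c 1 := by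
    have := ((hasDerivAt_id (1:ℝ)).const_sub 1).const_mul (-c)
    simpa using this
  simpa using h1.exp

lemma vR_cont (lam σ T r : ℝ) (hr1 : r < 1) : Continuous (vR lam σ T r) := by
  apply Continuous.div
  · fun_prop
  · fun_prop
  · intro x
    exact ne_of_gt (mul_pos (by linarith) (Real.exp_pos _))

lemma fR_cont (lam σ T r : ℝ) (W : ℕ) (hr1 : r < 1) : Continuous (fR lam σ T r W) := by
  have h := vR_cont lam σ T r hr1
  unfold fR
  fun_prop


lemma vR_one (lam σ T r : ℝ) (hr1 : r < 1) : vR lam σ T r 1 = 1 := by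
  simp [vR]
  exact (by linarith : (1:ℝ) - r ≠ 0)

lemma vR_deriv (lam σ T r : ℝ) (hr1 : r < 1) :
    HasDerivAt (vR lam σ T r) (-(lam * (r * T + (1 - r) * σ)) / (1 - r)) 1 := by
  have hb : HasDerivAt (fun x : ℝ => 1 - r * Real.exp (-(lam * T) * (1 - x)))
      (-(r * (lam * T))) 1 := by
    simpa using ((expAux (lam * T)).const_mul r).const_sub 1
  have ha : HasDerivAt (fun x : ℝ => (1 - r) * Real.exp (-(lam * σ) * (1 - x)))
      ((1 - r) * (lam * σ)) 1 := (expAux (lam * σ)).const_mul (1 - r)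
  have hne : (1 - r) * Real.exp (-(lam * σ) * (1 - 1)) ≠ 0 :=
    ne_of_gt (mul_pos (by linarith) (Real.exp_pos _))
  have h := hb.div ha hne
  simp only [sub_self, mul_zero, neg_zero, Real.exp_zero, mul_one] at h
  refine h.congr_deriv ?_
  have h1r : (1:ℝ) - r ≠ 0 := by linarith
  field_simp
  ring

lemma fR_one (lam σ T r : ℝ) (W : ℕ) (hr1 : r < 1) : fR lam σ T r W 1 = 0 := by
  simp [fR, vR_one lam σ T r hr1]

lemma fR_zero_pos (lam σ T r : ℝ) (hlam : 0 < lam) (hT : 0 < T)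
    (hr0 : 0 < r) (hr1 : r < 1) (W : ℕ) : 0 < fR lam σ T r W 0 := by
  have hv0 : 0 < vR lam σ T r 0 := by
    apply div_pos
    · have h1 : Real.exp (-(lam * T) * (1 - 0)) < 1 := by
        rw [Real.exp_lt_one_iff]
        nlinarith
      nlinarith [Real.exp_pos (-(lam * T) * (1 - 0))]
    · exact mul_pos (by linarith) (Real.exp_pos _)
  have hsum : 0 < ∑ i ∈ Finset.range (W + 1), vR lam σ T r 0 ^ i := by
    apply Finset.sum_pos (fun i _ => pow_pos hv0 i)
    exact ⟨0, Finset.mem_range.2 (Nat.succ_pos _)⟩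
  have := mul_pos (Real.exp_pos (-(lam * T) * (1 - 0))) hsum
  simpa [fR] using this

lemma sum_id_real (W : ℕ) :
    (∑ i ∈ Finset.range (W + 1), (i : ℝ)) = W * (W + 1) / 2 := by
  induction W with
  | zero => simp
  | succ n ih => rw [Finset.sum_range_succ, ih]; push_cast; ring

lemma fR_deriv (lam σ T r B : ℝ) (hr1 : r < 1) (W : ℕ)
    (hB : B = T + W * (r * T + (1 - r) * σ) / (2 * (1 - r))) :
    HasDerivAt (fR lam σ T r W) (((W : ℝ) + 1) * (lam * B - 1)) 1 := by
  have hv := vR_deriv lam σ T r hr1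
  set v' : ℝ := -(lam * (r * T + (1 - r) * σ)) / (1 - r) with hv'
  have hv1 : vR lam σ T r 1 = 1 := vR_one lam σ T r hr1
  have hS : HasDerivAt (fun x => ∑ i ∈ Finset.range (W + 1), vR lam σ T r x ^ i)
      (∑ i ∈ Finset.range (W + 1), (i : ℝ) * vR lam σ T r 1 ^ (i - 1) * v') 1 :=
    HasDerivAt.fun_sum (fun i _ => hv.pow i)
  rw [hv1] at hS
  simp only [one_pow, mul_one] at hS
  rw [← Finset.sum_mul, sum_id_real] at hS
  have hE := expAux (lam * T)
  have hg := hE.mul hS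
  have hh : HasDerivAt (fun x : ℝ => ((W : ℝ) + 1) * x * vR lam σ T r x ^ W)
      (((W : ℝ) + 1) * 1 * ((W : ℝ) * vR lam σ T r 1 ^ (W - 1) * v')
        + (((W : ℝ) + 1)) * (vR lam σ T r 1 ^ W)) 1 := by
    have h1 : HasDerivAt (fun x : ℝ => ((W : ℝ) + 1) * x) ((W : ℝ) + 1) 1 := by
      simpa using (hasDerivAt_id (1:ℝ)).const_mul ((W : ℝ) + 1)
    have := h1.mul (hv.pow W)
    refine this.congr_deriv ?_
    rw [Pi.pow_apply]
    ring
  have hf := hg.sub hh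
  rw [hv1] at hf
  simp only [sub_self, mul_zero, neg_zero, Real.exp_zero, one_pow, mul_one, one_mul] at hf
  have heq : ∀ x, (Real.exp (-(lam * T) * (1 - x)) * ∑ i ∈ Finset.range (W + 1), vR lam σ T r x ^ i)
      - ((W : ℝ) + 1) * x * vR lam σ T r x ^ W = fR lam σ T r W x := fun x => rfl
  refine hf.congr_deriv ?_
  have h1r : (1:ℝ) - r ≠ 0 := by linarith
  rw [hB, hv']
  simp only [Finset.sum_const, Finset.card_range, nsmul_eq_mul, mul_one]
  push_cast
  field_simp
  ring

/-- When `λB > 1`, the function `g - h` has a zero in the open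
unit disk different from `1`. -/
theorem greedy_zero_in_disk_when_unstable
    (lam σ T r : ℝ) (hlam : 0 < lam) (hσ : 0 < σ) (hT : 0 < T)
    (hr0 : 0 < r) (hr1 : r < 1) (W : ℕ) (hW : 1 ≤ W)
    (B : ℝ) (hB : B = T + W * (r * T + (1 - r) * σ) / (2 * (1 - r)))
    (hunst : 1 < lam * B)
    (a b : ℂ → ℂ) (u : ℂ → ℂ)
    (ha : ∀ x : ℂ, a x = (1 - (r : ℂ)) * Complex.exp (-((lam : ℂ) * σ) * (1 - x)))
    (hb : ∀ x : ℂ, b x = 1 - (r : ℂ) * Complex.exp (-((lam : ℂ) * T) * (1 - x)))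
    (hu : ∀ x : ℂ, u x = b x / a x) :
    ∃ x : ℂ, ‖x‖ < 1 ∧ x ≠ 1
      ∧ Complex.exp (-((lam : ℂ) * T) * (1 - x)) * ∑ i ∈ Finset.range (W + 1), u x ^ i
          = ((W : ℂ) + 1) * x * u x ^ W := by
  have hD : 0 < ((W : ℝ) + 1) * (lam * B - 1) :=
    mul_pos (by positivity) (by linarith)
  have hder := fR_deriv lam σ T r B hr1 W hB
  have hslope := hasDerivAt_iff_tendsto_slope.mp hder
  have hev : ∀ᶠ y in nhdsWithin (1:ℝ) (Set.Iio 1),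
      0 < slope (fR lam σ T r W) 1 y := by
    have h1 : ∀ᶠ y in nhdsWithin (1:ℝ) {(1:ℝ)}ᶜ, 0 < slope (fR lam σ T r W) 1 y :=
      hslope.eventually (eventually_gt_nhds hD)
    exact h1.filter_mono (nhdsWithin_mono 1 (fun y hy => ne_of_lt hy))
  have hmem : ∀ᶠ y in nhdsWithin (1:ℝ) (Set.Iio 1), y ∈ Set.Ioo (0:ℝ) 1 :=
    Filter.eventually_iff.mpr (Ioo_mem_nhdsLT_of_mem (by constructor <;> norm_num))
  obtain ⟨x0, hx0s, hx0m⟩ := (hev.and hmem).exists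
  have hx0lt : x0 < 1 := hx0m.2
  have hfx0 : fR lam σ T r W x0 < 0 := by
    have hsl : slope (fR lam σ T r W) 1 x0
        = fR lam σ T r W x0 / (x0 - 1) := by
      rw [slope_def_field, fR_one lam σ T r W hr1]
      ring_nf
    rw [hsl] at hx0s
    rcases div_pos_iff.mp hx0s with ⟨_, h2⟩ | ⟨h1, _⟩
    · linarith
    · exact h1
  have hcont := (fR_cont lam σ T r W hr1).continuousOn
      (s := Set.Icc (0:ℝ) x0)
  have h0le : (0:ℝ) ≤ x0 := le_of_lt hx0m.1
  have hiv := intermediate_value_Icc' h0le hcont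
  have h0mem : (0:ℝ) ∈ Set.Icc (fR lam σ T r W x0) (fR lam σ T r W 0) :=
    ⟨le_of_lt hfx0, le_of_lt (fR_zero_pos lam σ T r hlam hT hr0 hr1 W)⟩
  obtain ⟨c, hc, hfc⟩ := hiv h0mem
  refine ⟨(c : ℂ), ?_, ?_, ?_⟩
  · rw [Complex.norm_real, Real.norm_eq_abs, abs_of_nonneg hc.1]
    exact lt_of_le_of_lt hc.2 hx0lt
  · intro h
    have hc1 : c = 1 := by exact_mod_cast h
    have := hc.2
    linarith
  · have hre : Real.exp (-(lam * T) * (1 - c)) * ∑ i ∈ Finset.range (W + 1), vR lam σ T r c ^ i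
        = ((W : ℝ) + 1) * c * vR lam σ T r c ^ W := by
      have h0 := hfc
      unfold fR at h0
      linarith
    have huc : u (c : ℂ) = ((vR lam σ T r c : ℝ) : ℂ) := by
      rw [hu, hb, ha, vR]
      rw [show -((lam : ℂ) * T) * (1 - (c : ℂ)) = ((-(lam * T) * (1 - c) : ℝ) : ℂ) by
            push_cast; ring,
          show -((lam : ℂ) * σ) * (1 - (c : ℂ)) = ((-(lam * σ) * (1 - c) : ℝ) : ℂ) by
            push_cast; ring,
          ← Complex.ofReal_exp, ← Complex.ofReal_exp]
      push_cast
      ring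
    have hexp : Complex.exp (-((lam : ℂ) * T) * (1 - (c : ℂ)))
        = ((Real.exp (-(lam * T) * (1 - c)) : ℝ) : ℂ) := by
      rw [show -((lam : ℂ) * T) * (1 - (c : ℂ)) = ((-(lam * T) * (1 - c) : ℝ) : ℂ) by
            push_cast; ring, Complex.ofReal_exp]
    rw [hexp, huc]
    exact_mod_cast hre
end

section
/- Assume λT < 1. Let z ∈ (0,1], set r = 1 − z^M, and assume 1 − λ(1−r)(T−σ) ≠ 0. Define τ = λ(rT+(1−r)σ)/(1−λT+λ(rT+(1−r)σ)). Then 1 − τ = z holds if and only if z satisfies the polynomial equation P(z) := λ(T−σ)·z^{M+1} − z + (1−λT) = 0. In particular, if (1−τ)^M = 1−r and z = (1−r)^{1/M}, then P(z) = 0. -/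
/-- The fixed-point equation `1 - τ = z` for the greedy network is
equivalent to the polynomial equation `P(z) = λ(T-σ)z^{M+1} - z + (1-λT) = 0`. -/
theorem greedy_fixed_point_polynomial
    (lam σ T : ℝ) (hlam : 0 < lam) (hσ : 0 < σ) (hT : 0 < T)
    (M : ℕ) (hM : 1 ≤ M)
    (hlamT : lam * T < 1)
    (z : ℝ) (hz : z ∈ Set.Ioc (0 : ℝ) 1)
    (r : ℝ) (hr : r = 1 - z ^ M)
    (hden : 1 - lam * (1 - r) * (T - σ) ≠ 0)
    (τ : ℝ)
    (hτ : τ = lam * (r * T + (1 - r) * σ) / (1 - lam * T + lam * (r * T + (1 - r) * σ))) :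
    (1 - τ = z ↔ lam * (T - σ) * z ^ (M + 1) - z + (1 - lam * T) = 0)
      ∧ ((1 - τ) ^ M = 1 - r → z = (1 - r) ^ ((1 : ℝ) / M) →
          lam * (T - σ) * z ^ (M + 1) - z + (1 - lam * T) = 0) := by
  obtain ⟨hz0, hz1⟩ := hz
  have hzM : 0 < z ^ M := pow_pos hz0 M
  have hzM1 : z ^ M ≤ 1 := pow_le_one₀ hz0.le hz1
  set D : ℝ := 1 - lam * T + lam * (r * T + (1 - r) * σ) with hD
  have hDeq : D = 1 - lam * (T - σ) * z ^ M := by rw [hD, hr]; ring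
  have hDpos : 0 < D := by
    rw [hDeq]
    nlinarith [mul_pos (mul_pos hlam hzM) hσ,
      mul_nonneg (mul_pos hlam hT).le (by linarith : (0:ℝ) ≤ 1 - z ^ M)]
  have h1τ : 1 - τ = (1 - lam * T) / D := by
    rw [hτ]; field_simp [hD]; linarith [hD]
  have hiff : 1 - τ = z ↔ lam * (T - σ) * z ^ (M + 1) - z + (1 - lam * T) = 0 := by
    constructor
    · intro h
      have hzd : 1 - lam * T = z * D := by
        field_simp [hDpos.ne'] at h1τ
        rw [← h, h1τ]
      rw [hDeq] at hzd
      linear_combination hzd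
    · intro h
      have hzd : 1 - lam * T = z * D := by
        rw [hDeq]; linear_combination h
      rw [h1τ, hzd, mul_div_assoc, div_self hDpos.ne', mul_one]
  refine ⟨hiff, fun hpow _ => ?_⟩
  have h1τpos : 0 < 1 - τ := by
    rw [h1τ]; exact div_pos (by linarith) hDpos
  rw [hr] at hpow
  have : 1 - τ = z := by
    have hinj := pow_left_strictMonoOn₀ (M₀ := ℝ) (n := M) (by omega)
    exact hinj.injOn (by simpa using h1τpos.le) hz0.le (by simpa using hpow)
  exact hiff.mp this
end

section
/- Assume λT < 1 and M ≥ 1. Then the polynomial P(z) = λ(T−σ)·z^{M+1} − z + (1−λT) has exactly one root z in the real interval [0,1]; moreover this root lies in (0,1). -/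
open Finset

lemma two_roots_false (lam σ T : ℝ) (hlam : 0 < lam) (hσ : 0 < σ)
    (M : ℕ) (y1 y2 : ℝ) (h0 : 0 ≤ y1) (h12 : y1 < y2) (h21 : y2 ≤ 1)
    (hf1 : lam * (T - σ) * y1 ^ (M + 1) - y1 + (1 - lam * T) = 0)
    (hf2 : lam * (T - σ) * y2 ^ (M + 1) - y2 + (1 - lam * T) = 0) : False := by
  set a := lam * (T - σ) with ha
  have hy2pos : 0 < y2 := lt_of_le_of_lt h0 h12
  have hy2lt1 : y2 < 1 := by
    rcases lt_or_eq_of_le h21 with h | h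
    · exact h
    · exfalso
      rw [h] at hf2
      rw [ha] at hf2
      simp only [one_pow, mul_one] at hf2
      nlinarith
  set S1 := ∑ i ∈ range (M + 1), y2 ^ i * y1 ^ (M - i) with hS1
  set S2 := ∑ i ∈ range (M + 1), y2 ^ (M - i) with hS2
  have hG1 : S1 * (y2 - y1) = y2 ^ (M + 1) - y1 ^ (M + 1) := by
    simpa [hS1] using geom_sum₂_mul y2 y1 (M + 1)
  have hG2 : S2 * (1 - y2) = 1 - y2 ^ (M + 1) := by
    simpa [hS2] using geom_sum₂_mul (1 : ℝ) y2 (M + 1)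
  have h : a * S1 * (y2 - y1) = 1 * (y2 - y1) := by
    rw [mul_assoc, hG1]
    linear_combination hf2 - hf1
  have hAS1 : a * S1 = 1 := mul_right_cancel₀ (sub_ne_zero.mpr h12.ne') h
  have hS1pos : 0 < S1 := by
    rw [hS1]
    apply Finset.sum_pos'
      (fun i _ => mul_nonneg (pow_nonneg hy2pos.le _) (pow_nonneg h0 _))
    exact ⟨M, Finset.self_mem_range_succ M, by simpa using pow_pos hy2pos M⟩
  have ha_pos : 0 < a := by
    by_contra hc
    push_neg at hc
    have : a * S1 ≤ 0 := mul_nonpos_of_nonpos_of_nonneg hc hS1pos.le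
    linarith
  have hdiff : a * (1 - y2 ^ (M + 1)) - (1 - y2) = -(lam * σ) := by
    linear_combination -hf2 + ha
  have hE : a * S2 * (1 - y2) = (1 - y2) - lam * σ := by
    rw [mul_assoc, hG2]; linarith [hdiff]
  have haS2 : a * S2 < 1 := by
    nlinarith [hE, mul_pos hlam hσ, sub_pos.mpr hy2lt1]
  have hS12 : S1 ≤ S2 := by
    apply Finset.sum_le_sum
    intro i _
    calc y2 ^ i * y1 ^ (M - i) ≤ 1 * y2 ^ (M - i) :=
          mul_le_mul (pow_le_one₀ hy2pos.le h21) (pow_le_pow_left₀ h0 h12.le _)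
            (pow_nonneg h0 _) zero_le_one
      _ = y2 ^ (M - i) := one_mul _
  have : a * S1 ≤ a * S2 := mul_le_mul_of_nonneg_left hS12 ha_pos.le
  linarith

/-- Under `λT < 1`, the polynomial
`P(z) = λ(T-σ)z^{M+1} - z + (1-λT)` has exactly one root in `[0,1]`, and this
root lies in the open interval `(0,1)`. -/
theorem greedy_polynomial_unique_root
    (lam σ T : ℝ) (hlam : 0 < lam) (hσ : 0 < σ) (hT : 0 < T)
    (M : ℕ) (hM : 1 ≤ M)
    (hlamT : lam * T < 1) :
    ∃ z : ℝ, z ∈ Set.Ioo (0 : ℝ) 1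
      ∧ lam * (T - σ) * z ^ (M + 1) - z + (1 - lam * T) = 0
      ∧ ∀ y ∈ Set.Icc (0 : ℝ) 1,
          lam * (T - σ) * y ^ (M + 1) - y + (1 - lam * T) = 0 → y = z := by
  set f : ℝ → ℝ := fun y => lam * (T - σ) * y ^ (M + 1) - y + (1 - lam * T) with hf
  have hcont : ContinuousOn f (Set.Icc 0 1) := by
    apply Continuous.continuousOn
    fun_prop
  have hmem : (0 : ℝ) ∈ Set.Ioo (f 1) (f 0) := by
    constructor
    · show f 1 < 0
      simp only [hf, one_pow, mul_one]
      nlinarith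
    · show (0 : ℝ) < f 0
      simp only [hf]
      have hM1 : (0 : ℝ) ^ (M + 1) = 0 := zero_pow (Nat.succ_ne_zero M)
      rw [hM1]
      nlinarith
  obtain ⟨z, hz, hfz⟩ := intermediate_value_Ioo' (by norm_num : (0 : ℝ) ≤ 1) hcont hmem
  refine ⟨z, hz, hfz, ?_⟩
  intro y hy hfy
  by_contra hne
  rcases lt_or_gt_of_ne hne with h | h
  · exact two_roots_false lam σ T hlam hσ M y z hy.1 h hz.2.le hfy hfz
  · exact two_roots_false lam σ T hlam hσ M z y hz.1.le h hy.2 hfz hfy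
end

section
/- Let z ∈ (0,1] satisfy λ(T−σ)·z^{M+1} − z + (1−λT) = 0, and set r = 1 − z^M and B = T + W·(rT+(1−r)σ)/(2(1−r)). Then 1 − λB = (1−λT)·(1 − W(1−z)/(2z^{M+1})). Consequently (since λT<1), λB < 1 holds if and only if 2z^{M+1} > W(1−z). -/
/-- For a root `z` of the fixed-point polynomial, the ergodicity
quantity factorizes as `1 - λB = (1-λT)(1 - W(1-z)/(2z^{M+1}))`, so that
`λB < 1` iff `2z^{M+1} > W(1-z)`. -/
theorem greedy_network_ergodicity_criterion
    (lam σ T : ℝ) (hlam : 0 < lam) (hσ : 0 < σ) (hT : 0 < T)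
    (W M : ℕ) (hW : 1 ≤ W) (hM : 1 ≤ M)
    (hlamT : lam * T < 1)
    (z : ℝ) (hz : z ∈ Set.Ioc (0 : ℝ) 1)
    (hroot : lam * (T - σ) * z ^ (M + 1) - z + (1 - lam * T) = 0)
    (r B : ℝ) (hr : r = 1 - z ^ M)
    (hB : B = T + W * (r * T + (1 - r) * σ) / (2 * (1 - r))) :
    1 - lam * B = (1 - lam * T) * (1 - W * (1 - z) / (2 * z ^ (M + 1)))
      ∧ (lam * B < 1 ↔ W * (1 - z) < 2 * z ^ (M + 1)) := by
  obtain ⟨hz0, hz1⟩ := hz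
  have hzM : z ^ M ≠ 0 := pow_ne_zero _ (ne_of_gt hz0)
  have hzM1 : z ^ (M + 1) ≠ 0 := pow_ne_zero _ (ne_of_gt hz0)
  subst hr hB
  have key : 1 - lam * (T + W * ((1 - z ^ M) * T + (1 - (1 - z ^ M)) * σ) /
      (2 * (1 - (1 - z ^ M)))) =
      (1 - lam * T) * (1 - W * (1 - z) / (2 * z ^ (M + 1))) := by
    field_simp
    ring_nf
    linear_combination ((W:ℝ) * z ^ M) * hroot
  refine ⟨key, ?_⟩
  have hzM1pos : 0 < 2 * z ^ (M + 1) := by positivity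
  constructor
  · intro h
    have h1 : 0 < 1 - lam * (T + W * ((1 - z ^ M) * T + (1 - (1 - z ^ M)) * σ) /
        (2 * (1 - (1 - z ^ M)))) := by linarith
    rw [key] at h1
    have h2 : 0 < 1 - W * (1 - z) / (2 * z ^ (M + 1)) := by
      by_contra hc
      push_neg at hc
      nlinarith
    rw [sub_pos, div_lt_one hzM1pos] at h2
    linarith
  · intro h
    have h2 : 0 < 1 - W * (1 - z) / (2 * z ^ (M + 1)) := by
      rw [sub_pos, div_lt_one hzM1pos]; linarith
    have : 0 < 1 - lam * (T + W * ((1 - z ^ M) * T + (1 - (1 - z ^ M)) * σ) /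
        (2 * (1 - (1 - z ^ M)))) := by
      rw [key]; exact mul_pos (by linarith) h2
    linarith
end

section
/- Let q : ℕ×ℕ → ℝ be nonnegative with q(k,n)=0 whenever k>W, with ∑_{k,n} q(k,n) < ∞, and suppose q satisfies the stationary Kolmogorov equations of the fair load model: for all n≥1 and all 0≤k≤W, q(k,n) = 1_{k<W}·(1−r)·∑_{i=0}^{n} π_σ(i)·q(k+1,n−i) + 1_{k>0}·r·∑_{i=0}^{n} π_T(i)·q(k,n−i) + (1/(W+1))·[ r·∑_{i=0}^{n} π_T(i)·q(0,n+1−i) + (1−r)·∑_{i=0}^{n} π_σ(i)·q(0,n−i) ] + (r·π_T(n)/(W+1))·q(0,0); together with the boundary conditions q(k,0)=0 for all 1≤k≤W, and r·exp(−λT)·q(0,1) = q(0,0)·(1 − r·exp(−λT) − (1−r)·exp(−λσ)). Then for every complex x with 0<|x|<1, the generating functions G_k(x) = ∑_{n≥0} q(k,n)·x^n satisfy: a(x)·G_1(x) = G_0(x) − q(0,0) + D(x); a(x)·G_{k+1}(x) = b(x)·G_k(x) + D(x) for all 1≤k≤W−1; and b(x)·G_W(x) + D(x) = 0, where D(x)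 = −(G_0(x)/(W+1))·[ r·exp(−λT(1−x))/x + (1−r)·exp(−λσ(1−x)) ] + (q(0,0)/(W+1))·[ 1 + r·(1/x − 1)·exp(−λT(1−x)) ]. -/
open scoped BigOperators


lemma aux_conv_expand (p h : ℕ → ℝ) (x : ℂ) (n : ℕ) :
    ((∑ i ∈ Finset.range (n+1), p i * h (n-i) : ℝ) : ℂ) * x ^ n
      = ∑ i ∈ Finset.range (n+1), ((p i : ℂ) * x ^ i) * ((h (n-i) : ℂ) * x ^ (n-i)) := by
  push_cast
  rw [Finset.sum_mul]
  refine Finset.sum_congr rfl fun i hi => ?_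
  have hi' : i ≤ n := Nat.lt_succ_iff.mp (Finset.mem_range.mp hi)
  have hx : x ^ i * x ^ (n - i) = x ^ n := by rw [← pow_add, Nat.add_sub_cancel' hi']
  calc (p i : ℂ) * (h (n-i) : ℂ) * x ^ n
      = (p i : ℂ) * (h (n-i) : ℂ) * (x ^ i * x ^ (n-i)) := by rw [hx]
    _ = _ := by ring

lemma aux_conv_tsum (p h : ℕ → ℝ) (x : ℂ)
    (hp : Summable fun i : ℕ => ‖(p i : ℂ) * x ^ i‖)
    (hh : Summable fun n : ℕ => ‖(h n : ℂ) * x ^ n‖) :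
    Summable (fun n : ℕ => ((∑ i ∈ Finset.range (n+1), p i * h (n-i) : ℝ) : ℂ) * x ^ n)
    ∧ (∑' n : ℕ, ((∑ i ∈ Finset.range (n+1), p i * h (n-i) : ℝ) : ℂ) * x ^ n)
        = (∑' i : ℕ, (p i : ℂ) * x ^ i) * (∑' n : ℕ, (h n : ℂ) * x ^ n) := by
  have h1 : (fun n : ℕ => ((∑ i ∈ Finset.range (n+1), p i * h (n-i) : ℝ) : ℂ) * x ^ n)
      = fun n => ∑ i ∈ Finset.range (n+1), ((p i : ℂ) * x ^ i) * ((h (n-i) : ℂ) * x ^ (n-i)) := by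
    funext n; exact aux_conv_expand p h x n
  constructor
  · rw [h1]; exact (summable_norm_sum_mul_range_of_summable_norm hp hh).of_norm
  · rw [h1]; exact (tsum_mul_tsum_eq_tsum_sum_range_of_summable_norm hp hh).symm

lemma aux_poisson_tsum (c : ℝ) (x : ℂ) :
    ∑' i : ℕ, ((Real.exp (-c) * c ^ i / (i.factorial : ℝ) : ℝ) : ℂ) * x ^ i
      = Complex.exp (-(c : ℂ) * (1 - x)) := by
  have h1 : ∀ i : ℕ, ((Real.exp (-c) * c ^ i / (i.factorial : ℝ) : ℝ) : ℂ) * x ^ i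
      = (Real.exp (-c) : ℂ) * (((c : ℂ) * x) ^ i / (i.factorial : ℂ)) := by
    intro i; push_cast; ring
  rw [tsum_congr h1, tsum_mul_left]
  have h2 : ∑' i : ℕ, ((c : ℂ) * x) ^ i / (i.factorial : ℂ) = Complex.exp ((c : ℂ) * x) := by
    rw [Complex.exp_eq_exp_ℂ, NormedSpace.exp_eq_tsum_div]
  rw [h2, ← Complex.ofReal_neg, Complex.ofReal_exp, ← Complex.exp_add]
  congr 1; push_cast; ring

lemma aux_poisson_norm (c : ℝ) (x : ℂ) (hx : ‖x‖ ≤ 1) :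
    Summable fun i : ℕ => ‖((Real.exp (-c) * c ^ i / (i.factorial : ℝ) : ℝ) : ℂ) * x ^ i‖ := by
  refine Summable.of_nonneg_of_le (fun i => norm_nonneg _) (fun i => ?_)
    ((Real.summable_pow_div_factorial |c|).mul_left (Real.exp (-c)))
  have e1 : ‖((Real.exp (-c) * c ^ i / (i.factorial : ℝ) : ℝ) : ℂ) * x ^ i‖
      = |Real.exp (-c) * c ^ i / (i.factorial : ℝ)| * ‖x‖ ^ i := by
    rw [norm_mul, Complex.norm_real, norm_pow, Real.norm_eq_abs]
  rw [e1, abs_div, abs_mul, abs_of_pos (Real.exp_pos _), abs_pow, Nat.abs_cast]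
  have h2 : ‖x‖ ^ i ≤ 1 := pow_le_one₀ (norm_nonneg x) hx
  have h3 : (0:ℝ) ≤ Real.exp (-c) * |c| ^ i / (i.factorial : ℝ) := by positivity
  calc Real.exp (-c) * |c| ^ i / (i.factorial : ℝ) * ‖x‖ ^ i
      ≤ Real.exp (-c) * |c| ^ i / (i.factorial : ℝ) * 1 := mul_le_mul_of_nonneg_left h2 h3
    _ = Real.exp (-c) * (|c| ^ i / (i.factorial : ℝ)) := by ring

/-- The generating functions of a stationary solution of the fair
load model's Kolmogorov equations satisfy the linear system of Lemma 2. -/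
theorem fair_generating_function_system
    (lam σ T r : ℝ) (hlam : 0 < lam) (hσ : 0 < σ) (hT : 0 < T)
    (hr0 : 0 < r) (hr1 : r < 1) (W : ℕ) (hW : 1 ≤ W)
    (q : ℕ × ℕ → ℝ)
    (hpos : ∀ k n : ℕ, 0 ≤ q (k, n))
    (hzero : ∀ k n : ℕ, W < k → q (k, n) = 0)
    (hsum : Summable q)
    (hKol : ∀ n : ℕ, 1 ≤ n → ∀ k : ℕ, k ≤ W →
      q (k, n)
        = (if k < W then (1 - r) else 0)
            * ∑ i ∈ Finset.range (n + 1),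
                Real.exp (-(lam * σ)) * (lam * σ) ^ i / (i.factorial : ℝ) * q (k + 1, n - i)
          + (if 0 < k then r else 0)
            * ∑ i ∈ Finset.range (n + 1),
                Real.exp (-(lam * T)) * (lam * T) ^ i / (i.factorial : ℝ) * q (k, n - i)
          + (1 / ((W : ℝ) + 1))
            * (r * ∑ i ∈ Finset.range (n + 1),
                  Real.exp (-(lam * T)) * (lam * T) ^ i / (i.factorial : ℝ) * q (0, n + 1 - i)
               + (1 - r) * ∑ i ∈ Finset.range (n + 1),
                  Real.exp (-(lam * σ)) * (lam * σ) ^ i / (i.factorial : ℝ) * q (0, n - i))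
          + (r * (Real.exp (-(lam * T)) * (lam * T) ^ n / (n.factorial : ℝ)) / ((W : ℝ) + 1))
            * q (0, 0))
    (hbd0 : ∀ k : ℕ, 1 ≤ k → k ≤ W → q (k, 0) = 0)
    (hbd1 : r * Real.exp (-(lam * T)) * q (0, 1)
      = q (0, 0) * (1 - r * Real.exp (-(lam * T)) - (1 - r) * Real.exp (-(lam * σ))))
    (x : ℂ) (hx0 : 0 < ‖x‖) (hx1 : ‖x‖ < 1)
    (G : ℕ → ℂ) (hG : ∀ k : ℕ, G k = ∑' n : ℕ, (q (k, n) : ℂ) * x ^ n)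
    (a b D : ℂ)
    (ha : a = (1 - (r : ℂ)) * Complex.exp (-((lam : ℂ) * σ) * (1 - x)))
    (hb : b = 1 - (r : ℂ) * Complex.exp (-((lam : ℂ) * T) * (1 - x)))
    (hD : D = -(G 0 / ((W : ℂ) + 1))
          * ((r : ℂ) * Complex.exp (-((lam : ℂ) * T) * (1 - x)) / x
              + (1 - (r : ℂ)) * Complex.exp (-((lam : ℂ) * σ) * (1 - x)))
        + ((q (0, 0) : ℂ) / ((W : ℂ) + 1))
          * (1 + (r : ℂ) * (1 / x - 1) * Complex.exp (-((lam : ℂ) * T) * (1 - x)))) :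
    a * G 1 = G 0 - (q (0, 0) : ℂ) + D
      ∧ (∀ k : ℕ, 1 ≤ k → k ≤ W - 1 → a * G (k + 1) = b * G k + D)
      ∧ b * G W + D = 0 := by
  have hxne : x ≠ 0 := by
    intro h; rw [h] at hx0; simp at hx0
  have hxle : ‖x‖ ≤ 1 := hx1.le
  have hq : ∀ k : ℕ, Summable fun n : ℕ => q (k, n) := fun k =>
    hsum.comp_injective (fun a b hab => by simpa using hab)
  have hnorm_of : ∀ h : ℕ → ℝ, Summable h → (∀ n, 0 ≤ h n) →
      Summable fun n : ℕ => ‖(h n : ℂ) * x ^ n‖ := by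
    intro h hh hp
    refine Summable.of_nonneg_of_le (fun n => norm_nonneg _) (fun n => ?_) hh
    have e1 : ‖(h n : ℂ) * x ^ n‖ = |h n| * ‖x‖ ^ n := by
      rw [norm_mul, Complex.norm_real, norm_pow, Real.norm_eq_abs]
    rw [e1, abs_of_nonneg (hp n)]
    have h2 : ‖x‖ ^ n ≤ 1 := pow_le_one₀ (norm_nonneg x) hxle
    nlinarith [hp n, pow_nonneg (norm_nonneg x) n]
  have hqsum : ∀ k : ℕ, Summable fun n : ℕ => (q (k, n) : ℂ) * x ^ n := fun k =>
    (hnorm_of _ (hq k) (hpos k)).of_norm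
  have hgsum : Summable fun m : ℕ => q (0, m + 1) :=
    hsum.comp_injective (fun a b hab => by simpa using hab)
  have hgnorm : Summable fun m : ℕ => ‖(q (0, m + 1) : ℂ) * x ^ m‖ :=
    hnorm_of _ hgsum (fun n => hpos 0 (n+1))
  have hgval : ∑' m : ℕ, (q (0, m + 1) : ℂ) * x ^ m = (G 0 - (q (0,0) : ℂ)) / x := by
    rw [eq_div_iff hxne, hG 0]
    have h0 := Summable.tsum_eq_zero_add (hqsum 0)
    beta_reduce at h0
    have h1 : ∀ n : ℕ, (q (0, n+1) : ℂ) * x ^ (n+1)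
        = ((q (0, n+1) : ℂ) * x ^ n) * x := fun n => by rw [pow_succ]; ring
    rw [tsum_congr h1, tsum_mul_right] at h0
    rw [h0]; ring
  have hpσn : Summable fun i : ℕ =>
      ‖((Real.exp (-(lam * σ)) * (lam * σ) ^ i / (i.factorial : ℝ) : ℝ) : ℂ) * x ^ i‖ :=
    aux_poisson_norm (lam * σ) x hxle
  have hpTn : Summable fun i : ℕ =>
      ‖((Real.exp (-(lam * T)) * (lam * T) ^ i / (i.factorial : ℝ) : ℝ) : ℂ) * x ^ i‖ :=
    aux_poisson_norm (lam * T) x hxle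
  have hpσv : ∑' i : ℕ, ((Real.exp (-(lam * σ)) * (lam * σ) ^ i / (i.factorial : ℝ) : ℝ) : ℂ) * x ^ i
      = Complex.exp (-((lam : ℂ) * σ) * (1 - x)) := by
    rw [aux_poisson_tsum]; congr 1; push_cast; ring
  have hpTv : ∑' i : ℕ, ((Real.exp (-(lam * T)) * (lam * T) ^ i / (i.factorial : ℝ) : ℝ) : ℂ) * x ^ i
      = Complex.exp (-((lam : ℂ) * T) * (1 - x)) := by
    rw [aux_poisson_tsum]; congr 1; push_cast; ring
  have hconvσ : ∀ j : ℕ,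
      Summable (fun n : ℕ => ((∑ i ∈ Finset.range (n+1),
          Real.exp (-(lam * σ)) * (lam * σ) ^ i / (i.factorial : ℝ) * q (j, n - i) : ℝ) : ℂ) * x ^ n)
      ∧ (∑' n : ℕ, ((∑ i ∈ Finset.range (n+1),
          Real.exp (-(lam * σ)) * (lam * σ) ^ i / (i.factorial : ℝ) * q (j, n - i) : ℝ) : ℂ) * x ^ n)
          = Complex.exp (-((lam : ℂ) * σ) * (1 - x)) * G j := by
    intro j
    have h := aux_conv_tsum (fun i => Real.exp (-(lam * σ)) * (lam * σ) ^ i / (i.factorial : ℝ))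
      (fun m => q (j, m)) x hpσn (hnorm_of _ (hq j) (hpos j))
    refine ⟨h.1, ?_⟩
    have h2 : (∑' n : ℕ, ((∑ i ∈ Finset.range (n+1),
          Real.exp (-(lam * σ)) * (lam * σ) ^ i / (i.factorial : ℝ) * q (j, n - i) : ℝ) : ℂ) * x ^ n)
        = (∑' i : ℕ, ((Real.exp (-(lam * σ)) * (lam * σ) ^ i / (i.factorial : ℝ) : ℝ) : ℂ) * x ^ i)
          * (∑' n : ℕ, (q (j, n) : ℂ) * x ^ n) := h.2
    rw [h2, hpσv, ← hG j]
  have hconvT : ∀ j : ℕ,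
      Summable (fun n : ℕ => ((∑ i ∈ Finset.range (n+1),
          Real.exp (-(lam * T)) * (lam * T) ^ i / (i.factorial : ℝ) * q (j, n - i) : ℝ) : ℂ) * x ^ n)
      ∧ (∑' n : ℕ, ((∑ i ∈ Finset.range (n+1),
          Real.exp (-(lam * T)) * (lam * T) ^ i / (i.factorial : ℝ) * q (j, n - i) : ℝ) : ℂ) * x ^ n)
          = Complex.exp (-((lam : ℂ) * T) * (1 - x)) * G j := by
    intro j
    have h := aux_conv_tsum (fun i => Real.exp (-(lam * T)) * (lam * T) ^ i / (i.factorial : ℝ))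
      (fun m => q (j, m)) x hpTn (hnorm_of _ (hq j) (hpos j))
    refine ⟨h.1, ?_⟩
    have h2 : (∑' n : ℕ, ((∑ i ∈ Finset.range (n+1),
          Real.exp (-(lam * T)) * (lam * T) ^ i / (i.factorial : ℝ) * q (j, n - i) : ℝ) : ℂ) * x ^ n)
        = (∑' i : ℕ, ((Real.exp (-(lam * T)) * (lam * T) ^ i / (i.factorial : ℝ) : ℝ) : ℂ) * x ^ i)
          * (∑' n : ℕ, (q (j, n) : ℂ) * x ^ n) := h.2
    rw [h2, hpTv, ← hG j]
  have hidx : ∀ n : ℕ,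
      (∑ i ∈ Finset.range (n+1),
          Real.exp (-(lam * T)) * (lam * T) ^ i / (i.factorial : ℝ) * q (0, n - i + 1))
      = ∑ i ∈ Finset.range (n+1),
          Real.exp (-(lam * T)) * (lam * T) ^ i / (i.factorial : ℝ) * q (0, n + 1 - i) := by
    intro n
    refine Finset.sum_congr rfl fun i hi => ?_
    have hi' : i ≤ n := Nat.lt_succ_iff.mp (Finset.mem_range.mp hi)
    rw [show n - i + 1 = n + 1 - i by omega]
  have hconvC :
      Summable (fun n : ℕ => ((∑ i ∈ Finset.range (n+1),
          Real.exp (-(lam * T)) * (lam * T) ^ i / (i.factorial : ℝ) * q (0, n + 1 - i) : ℝ) : ℂ) * x ^ n)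
      ∧ (∑' n : ℕ, ((∑ i ∈ Finset.range (n+1),
          Real.exp (-(lam * T)) * (lam * T) ^ i / (i.factorial : ℝ) * q (0, n + 1 - i) : ℝ) : ℂ) * x ^ n)
          = Complex.exp (-((lam : ℂ) * T) * (1 - x)) * ((G 0 - (q (0,0) : ℂ)) / x) := by
    have h := aux_conv_tsum (fun i => Real.exp (-(lam * T)) * (lam * T) ^ i / (i.factorial : ℝ))
      (fun m => q (0, m + 1)) x hpTn hgnorm
    have h1 : Summable (fun n : ℕ => ((∑ i ∈ Finset.range (n+1),
        Real.exp (-(lam * T)) * (lam * T) ^ i / (i.factorial : ℝ) * q (0, n - i + 1) : ℝ) : ℂ) * x ^ n) := h.1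
    have h2 : (∑' n : ℕ, ((∑ i ∈ Finset.range (n+1),
          Real.exp (-(lam * T)) * (lam * T) ^ i / (i.factorial : ℝ) * q (0, n - i + 1) : ℝ) : ℂ) * x ^ n)
        = (∑' i : ℕ, ((Real.exp (-(lam * T)) * (lam * T) ^ i / (i.factorial : ℝ) : ℝ) : ℂ) * x ^ i)
          * (∑' m : ℕ, (q (0, m + 1) : ℂ) * x ^ m) := h.2
    constructor
    · exact h1.congr (fun n => by rw [hidx n])
    · have h3 : (∑' n : ℕ, ((∑ i ∈ Finset.range (n+1),
          Real.exp (-(lam * T)) * (lam * T) ^ i / (i.factorial : ℝ) * q (0, n + 1 - i) : ℝ) : ℂ) * x ^ n)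
          = (∑' n : ℕ, ((∑ i ∈ Finset.range (n+1),
          Real.exp (-(lam * T)) * (lam * T) ^ i / (i.factorial : ℝ) * q (0, n - i + 1) : ℝ) : ℂ) * x ^ n) :=
        tsum_congr (fun n => by rw [hidx n])
      rw [h3, h2, hpTv, hgval]
  have hFEs : Summable (fun n : ℕ =>
      ((Real.exp (-(lam * T)) * (lam * T) ^ n / (n.factorial : ℝ) : ℝ) : ℂ) * x ^ n) := hpTn.of_norm
  -- the master identity
  have master : ∀ k : ℕ, k ≤ W →
      G k = (q (k, 0) : ℂ)
        + (if k < W then (1 - (r : ℂ)) else 0)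
            * (Complex.exp (-((lam : ℂ) * σ) * (1 - x)) * G (k + 1)
                - Complex.exp (-((lam : ℂ) * σ)) * (q (k + 1, 0) : ℂ))
        + (if 0 < k then (r : ℂ) else 0)
            * (Complex.exp (-((lam : ℂ) * T) * (1 - x)) * G k
                - Complex.exp (-((lam : ℂ) * T)) * (q (k, 0) : ℂ))
        + (1 / ((W : ℂ) + 1))
            * ((r : ℂ) * (Complex.exp (-((lam : ℂ) * T) * (1 - x)) * ((G 0 - (q (0,0) : ℂ)) / x)
                  - Complex.exp (-((lam : ℂ) * T)) * (q (0, 1) : ℂ))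
               + (1 - (r : ℂ)) * (Complex.exp (-((lam : ℂ) * σ) * (1 - x)) * G 0
                  - Complex.exp (-((lam : ℂ) * σ)) * (q (0, 0) : ℂ)))
        + ((r : ℂ) * (q (0,0) : ℂ) / ((W : ℂ) + 1))
            * (Complex.exp (-((lam : ℂ) * T) * (1 - x)) - Complex.exp (-((lam : ℂ) * T))) := by
    intro k hk
    have pointwise : ∀ n : ℕ, (q (k, n + 1) : ℂ) * x ^ (n + 1)
        = (if k < W then (1 - (r : ℂ)) else 0)
            * (((∑ i ∈ Finset.range (n + 1 + 1),
                Real.exp (-(lam * σ)) * (lam * σ) ^ i / (i.factorial : ℝ) * q (k + 1, n + 1 - i) : ℝ) : ℂ) * x ^ (n + 1))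
          + (if 0 < k then (r : ℂ) else 0)
            * (((∑ i ∈ Finset.range (n + 1 + 1),
                Real.exp (-(lam * T)) * (lam * T) ^ i / (i.factorial : ℝ) * q (k, n + 1 - i) : ℝ) : ℂ) * x ^ (n + 1))
          + (1 / ((W : ℂ) + 1))
            * ((r : ℂ) * (((∑ i ∈ Finset.range (n + 1 + 1),
                  Real.exp (-(lam * T)) * (lam * T) ^ i / (i.factorial : ℝ) * q (0, n + 1 + 1 - i) : ℝ) : ℂ) * x ^ (n + 1))
               + (1 - (r : ℂ)) * (((∑ i ∈ Finset.range (n + 1 + 1),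
                  Real.exp (-(lam * σ)) * (lam * σ) ^ i / (i.factorial : ℝ) * q (0, n + 1 - i) : ℝ) : ℂ) * x ^ (n + 1)))
          + ((r : ℂ) * (q (0,0) : ℂ) / ((W : ℂ) + 1))
            * (((Real.exp (-(lam * T)) * (lam * T) ^ (n + 1) / ((n + 1).factorial : ℝ) : ℝ) : ℂ) * x ^ (n + 1)) := by
      intro n
      rw [hKol (n + 1) (Nat.le_add_left 1 n) k hk]
      split_ifs with h1 h2 <;> push_cast <;> ring
    have sA : Summable (fun n : ℕ => ((∑ i ∈ Finset.range (n + 1 + 1),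
        Real.exp (-(lam * σ)) * (lam * σ) ^ i / (i.factorial : ℝ) * q (k + 1, n + 1 - i) : ℝ) : ℂ) * x ^ (n + 1)) :=
      (hconvσ (k+1)).1.comp_injective Nat.succ_injective
    have sB : Summable (fun n : ℕ => ((∑ i ∈ Finset.range (n + 1 + 1),
        Real.exp (-(lam * T)) * (lam * T) ^ i / (i.factorial : ℝ) * q (k, n + 1 - i) : ℝ) : ℂ) * x ^ (n + 1)) :=
      (hconvT k).1.comp_injective Nat.succ_injective
    have sC : Summable (fun n : ℕ => ((∑ i ∈ Finset.range (n + 1 + 1),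
        Real.exp (-(lam * T)) * (lam * T) ^ i / (i.factorial : ℝ) * q (0, n + 1 + 1 - i) : ℝ) : ℂ) * x ^ (n + 1)) :=
      hconvC.1.comp_injective Nat.succ_injective
    have sD : Summable (fun n : ℕ => ((∑ i ∈ Finset.range (n + 1 + 1),
        Real.exp (-(lam * σ)) * (lam * σ) ^ i / (i.factorial : ℝ) * q (0, n + 1 - i) : ℝ) : ℂ) * x ^ (n + 1)) :=
      (hconvσ 0).1.comp_injective Nat.succ_injective
    have sE : Summable (fun n : ℕ =>
        ((Real.exp (-(lam * T)) * (lam * T) ^ (n + 1) / ((n + 1).factorial : ℝ) : ℝ) : ℂ) * x ^ (n + 1)) :=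
      hFEs.comp_injective Nat.succ_injective
    have key : (∑' n : ℕ, (q (k, n + 1) : ℂ) * x ^ (n + 1))
        = (if k < W then (1 - (r : ℂ)) else 0)
            * (∑' n : ℕ, ((∑ i ∈ Finset.range (n + 1 + 1),
                Real.exp (-(lam * σ)) * (lam * σ) ^ i / (i.factorial : ℝ) * q (k + 1, n + 1 - i) : ℝ) : ℂ) * x ^ (n + 1))
          + (if 0 < k then (r : ℂ) else 0)
            * (∑' n : ℕ, ((∑ i ∈ Finset.range (n + 1 + 1),
                Real.exp (-(lam * T)) * (lam * T) ^ i / (i.factorial : ℝ) * q (k, n + 1 - i) : ℝ) : ℂ) * x ^ (n + 1))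
          + (1 / ((W : ℂ) + 1))
            * ((r : ℂ) * (∑' n : ℕ, ((∑ i ∈ Finset.range (n + 1 + 1),
                  Real.exp (-(lam * T)) * (lam * T) ^ i / (i.factorial : ℝ) * q (0, n + 1 + 1 - i) : ℝ) : ℂ) * x ^ (n + 1))
               + (1 - (r : ℂ)) * (∑' n : ℕ, ((∑ i ∈ Finset.range (n + 1 + 1),
                  Real.exp (-(lam * σ)) * (lam * σ) ^ i / (i.factorial : ℝ) * q (0, n + 1 - i) : ℝ) : ℂ) * x ^ (n + 1)))
          + ((r : ℂ) * (q (0,0) : ℂ) / ((W : ℂ) + 1))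
            * (∑' n : ℕ, ((Real.exp (-(lam * T)) * (lam * T) ^ (n + 1) / ((n + 1).factorial : ℝ) : ℝ) : ℂ) * x ^ (n + 1)) := by
      rw [tsum_congr pointwise]
      exact ((((sA.hasSum.mul_left _).add (sB.hasSum.mul_left _)).add
        (((sC.hasSum.mul_left _).add (sD.hasSum.mul_left _)).mul_left _)).add
        (sE.hasSum.mul_left _)).tsum_eq
    -- shifted tsum values
    have tA : (∑' n : ℕ, ((∑ i ∈ Finset.range (n + 1 + 1),
        Real.exp (-(lam * σ)) * (lam * σ) ^ i / (i.factorial : ℝ) * q (k + 1, n + 1 - i) : ℝ) : ℂ) * x ^ (n + 1))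
        = Complex.exp (-((lam : ℂ) * σ) * (1 - x)) * G (k + 1)
          - Complex.exp (-((lam : ℂ) * σ)) * (q (k + 1, 0) : ℂ) := by
      have e := Summable.tsum_eq_zero_add (hconvσ (k+1)).1
      beta_reduce at e
      rw [(hconvσ (k+1)).2] at e
      have e0 : ((∑ i ∈ Finset.range (0 + 1),
          Real.exp (-(lam * σ)) * (lam * σ) ^ i / (i.factorial : ℝ) * q (k + 1, 0 - i) : ℝ) : ℂ) * x ^ (0:ℕ)
          = Complex.exp (-((lam : ℂ) * σ)) * (q (k + 1, 0) : ℂ) := by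
        simp [Finset.sum_range_one]
      rw [e0] at e
      linear_combination -e
    have tB : (∑' n : ℕ, ((∑ i ∈ Finset.range (n + 1 + 1),
        Real.exp (-(lam * T)) * (lam * T) ^ i / (i.factorial : ℝ) * q (k, n + 1 - i) : ℝ) : ℂ) * x ^ (n + 1))
        = Complex.exp (-((lam : ℂ) * T) * (1 - x)) * G k
          - Complex.exp (-((lam : ℂ) * T)) * (q (k, 0) : ℂ) := by
      have e := Summable.tsum_eq_zero_add (hconvT k).1
      beta_reduce at e
      rw [(hconvT k).2] at e
      have e0 : ((∑ i ∈ Finset.range (0 + 1),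
          Real.exp (-(lam * T)) * (lam * T) ^ i / (i.factorial : ℝ) * q (k, 0 - i) : ℝ) : ℂ) * x ^ (0:ℕ)
          = Complex.exp (-((lam : ℂ) * T)) * (q (k, 0) : ℂ) := by
        simp [Finset.sum_range_one]
      rw [e0] at e
      linear_combination -e
    have tC : (∑' n : ℕ, ((∑ i ∈ Finset.range (n + 1 + 1),
        Real.exp (-(lam * T)) * (lam * T) ^ i / (i.factorial : ℝ) * q (0, n + 1 + 1 - i) : ℝ) : ℂ) * x ^ (n + 1))
        = Complex.exp (-((lam : ℂ) * T) * (1 - x)) * ((G 0 - (q (0,0) : ℂ)) / x)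
          - Complex.exp (-((lam : ℂ) * T)) * (q (0, 1) : ℂ) := by
      have e := Summable.tsum_eq_zero_add hconvC.1
      beta_reduce at e
      rw [hconvC.2] at e
      have e0 : ((∑ i ∈ Finset.range (0 + 1),
          Real.exp (-(lam * T)) * (lam * T) ^ i / (i.factorial : ℝ) * q (0, 0 + 1 - i) : ℝ) : ℂ) * x ^ (0:ℕ)
          = Complex.exp (-((lam : ℂ) * T)) * (q (0, 1) : ℂ) := by
        simp [Finset.sum_range_one]
      rw [e0] at e
      linear_combination -e
    have tD : (∑' n : ℕ, ((∑ i ∈ Finset.range (n + 1 + 1),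
        Real.exp (-(lam * σ)) * (lam * σ) ^ i / (i.factorial : ℝ) * q (0, n + 1 - i) : ℝ) : ℂ) * x ^ (n + 1))
        = Complex.exp (-((lam : ℂ) * σ) * (1 - x)) * G 0
          - Complex.exp (-((lam : ℂ) * σ)) * (q (0, 0) : ℂ) := by
      have e := Summable.tsum_eq_zero_add (hconvσ 0).1
      beta_reduce at e
      rw [(hconvσ 0).2] at e
      have e0 : ((∑ i ∈ Finset.range (0 + 1),
          Real.exp (-(lam * σ)) * (lam * σ) ^ i / (i.factorial : ℝ) * q (0, 0 - i) : ℝ) : ℂ) * x ^ (0:ℕ)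
          = Complex.exp (-((lam : ℂ) * σ)) * (q (0, 0) : ℂ) := by
        simp [Finset.sum_range_one]
      rw [e0] at e
      linear_combination -e
    have tE : (∑' n : ℕ, ((Real.exp (-(lam * T)) * (lam * T) ^ (n + 1) / ((n + 1).factorial : ℝ) : ℝ) : ℂ) * x ^ (n + 1))
        = Complex.exp (-((lam : ℂ) * T) * (1 - x)) - Complex.exp (-((lam : ℂ) * T)) := by
      have e := Summable.tsum_eq_zero_add hFEs
      beta_reduce at e
      rw [hpTv] at e
      have e0 : ((Real.exp (-(lam * T)) * (lam * T) ^ (0:ℕ) / ((0:ℕ).factorial : ℝ) : ℝ) : ℂ) * x ^ (0:ℕ)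
          = Complex.exp (-((lam : ℂ) * T)) := by
        simp
      rw [e0] at e
      linear_combination -e
    have e := Summable.tsum_eq_zero_add (hqsum k)
    beta_reduce at e
    conv_lhs => rw [hG k, e, key, tA, tB, tC, tD, tE]
    ring
  -- boundary algebra
  have hbd1c : (r : ℂ) * Complex.exp (-((lam : ℂ) * T)) * (q (0, 1) : ℂ)
      = (q (0, 0) : ℂ) * (1 - (r : ℂ) * Complex.exp (-((lam : ℂ) * T))
          - (1 - (r : ℂ)) * Complex.exp (-((lam : ℂ) * σ))) := by
    have h := congrArg (Complex.ofReal) hbd1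
    push_cast at h
    linear_combination h
  have htail :
      (1 / ((W : ℂ) + 1))
          * ((r : ℂ) * (Complex.exp (-((lam : ℂ) * T) * (1 - x)) * ((G 0 - (q (0,0) : ℂ)) / x)
                - Complex.exp (-((lam : ℂ) * T)) * (q (0, 1) : ℂ))
             + (1 - (r : ℂ)) * (Complex.exp (-((lam : ℂ) * σ) * (1 - x)) * G 0
                - Complex.exp (-((lam : ℂ) * σ)) * (q (0, 0) : ℂ)))
        + ((r : ℂ) * (q (0,0) : ℂ) / ((W : ℂ) + 1))
          * (Complex.exp (-((lam : ℂ) * T) * (1 - x)) - Complex.exp (-((lam : ℂ) * T))) = -D := by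
    rw [hD]
    linear_combination (-(1:ℂ) / ((W:ℂ) + 1)) * hbd1c
  refine ⟨?_, ?_, ?_⟩
  · have m0 := master 0 (Nat.zero_le W)
    rw [if_pos (by omega : 0 < W), if_neg (lt_irrefl 0), hbd0 1 le_rfl hW] at m0
    push_cast at m0
    rw [ha]
    linear_combination -m0 - htail
  · intro k hk1 hk2
    have hkW : k < W := by omega
    have m := master k hkW.le
    rw [if_pos hkW, if_pos (by omega : 0 < k), hbd0 k hk1 hkW.le,
      hbd0 (k+1) (by omega) (by omega)] at m
    push_cast at m
    rw [ha, hb]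
    linear_combination -m - htail
  · have m := master W le_rfl
    rw [if_neg (lt_irrefl W), if_pos (by omega : 0 < W), hbd0 W hW le_rfl] at m
    push_cast at m
    rw [hb]
    linear_combination m + htail
end

section
/- Let x be a complex number with x≠0, a(x)≠0 and S(x)≠0, let q₀₀ be a complex number, and let G_0, G_1, …, G_W be complex numbers satisfying the linear system: a(x)·G_1 = G_0 − q₀₀ + D; a(x)·G_{k+1} = b(x)·G_k + D for all 1≤k≤W−1; and b(x)·G_W + D = 0, where D = −(G_0/(W+1))·[ r·exp(−λT(1−x))/x + (1−r)·exp(−λσ(1−x)) ] + (q₀₀/(W+1))·[ 1 + r·(1/x−1)·exp(−λT(1−x)) ]. Then for every 1≤k≤W, G_k = ((G_0 − q₀₀)/a(x)) · (∑_{i=k−1}^{W−1} u(x)^i)/S(x), and moreover R̄(x)·G_0 = q₀₀·Q̄(x). -/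
open scoped BigOperators

/-- Formal solution of the linear system for the fair load model:
the generating functions are expressed in terms of `G 0`, and `G 0` satisfies
`R̄·G₀ = q₀₀·Q̄`. -/
theorem fair_formal_solution
    (lam σ T r : ℝ) (hlam : 0 < lam) (hσ : 0 < σ) (hT : 0 < T)
    (hr0 : 0 < r) (hr1 : r < 1) (W : ℕ) (hW : 1 ≤ W)
    (x : ℂ) (hx : x ≠ 0)
    (a b u S f Rbar Qbar : ℂ)
    (ha : a = (1 - (r : ℂ)) * Complex.exp (-((lam : ℂ) * σ) * (1 - x)))
    (hb : b = 1 - (r : ℂ) * Complex.exp (-((lam : ℂ) * T) * (1 - x)))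
    (hu : u = b / a)
    (hS : S = ∑ i ∈ Finset.range (W + 1), u ^ i)
    (hf : f = ((W : ℂ) + 1) * u ^ W / S)
    (hRbar : Rbar = (r : ℂ) * Complex.exp (-((lam : ℂ) * T) * (1 - x)) / x
        + (1 - (r : ℂ)) * Complex.exp (-((lam : ℂ) * σ) * (1 - x)) - f)
    (hQbar : Qbar = 1 + (r : ℂ) * (1 / x - 1) * Complex.exp (-((lam : ℂ) * T) * (1 - x)) - f)
    (ha0 : a ≠ 0) (hS0 : S ≠ 0)
    (q00 : ℂ) (G : ℕ → ℂ) (D : ℂ)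
    (hD : D = -(G 0 / ((W : ℂ) + 1))
          * ((r : ℂ) * Complex.exp (-((lam : ℂ) * T) * (1 - x)) / x
              + (1 - (r : ℂ)) * Complex.exp (-((lam : ℂ) * σ) * (1 - x)))
        + (q00 / ((W : ℂ) + 1))
          * (1 + (r : ℂ) * (1 / x - 1) * Complex.exp (-((lam : ℂ) * T) * (1 - x))))
    (h1 : a * G 1 = G 0 - q00 + D)
    (h2 : ∀ k : ℕ, 1 ≤ k → k ≤ W - 1 → a * G (k + 1) = b * G k + D)
    (h3 : b * G W + D = 0) :
    (∀ k : ℕ, 1 ≤ k → k ≤ W →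
        G k = ((G 0 - q00) / a) * (∑ i ∈ Finset.Ico (k - 1) W, u ^ i) / S)
      ∧ Rbar * G 0 = q00 * Qbar := by
  have hW1 : ((W : ℂ) + 1) ≠ 0 := Nat.cast_add_one_ne_zero W
  have hba : b = u * a := by rw [hu]; field_simp
  -- the key recursion, solved forward
  have key : ∀ k : ℕ, 1 ≤ k → k ≤ W →
      a * G k = (G 0 - q00) * u ^ (k - 1) + D * ∑ i ∈ Finset.range k, u ^ i := by
    intro k
    induction k with
    | zero => intro h _; omega
    | succ n ih =>
      intro _ hkW
      rcases Nat.eq_zero_or_pos n with hn | hn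
      · subst hn; simpa using h1
      · have hn1 : n - 1 + 1 = n := by omega
        have hrec := h2 n hn (by omega)
        have hG := ih hn (by omega)
        have hpow : u * u ^ (n - 1) = u ^ n := by rw [← pow_succ', hn1]
        have hgs : (∑ i ∈ Finset.range (n + 1), u ^ i)
            = u * ∑ i ∈ Finset.range n, u ^ i + 1 := geom_sum_succ
        rw [hba] at hrec
        simp only [Nat.add_sub_cancel]
        linear_combination hrec + u * hG + (G 0 - q00) * hpow - D * hgs
  -- value of D
  have hDS : D * S = -((G 0 - q00) * u ^ W) := by
    have hK := key W hW le_rfl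
    have hW1' : W - 1 + 1 = W := by omega
    have hpowW : u * u ^ (W - 1) = u ^ W := by rw [← pow_succ', hW1']
    have hSgs : S = u * ∑ i ∈ Finset.range W, u ^ i + 1 := by
      rw [hS]; exact geom_sum_succ
    have h3' := h3
    rw [hba] at h3'
    linear_combination (-u) * hK + h3' + D * hSgs - (G 0 - q00) * hpowW
  -- shifting lemma for geometric sums
  have hshift : ∀ m n : ℕ, u ^ m * ∑ i ∈ Finset.range n, u ^ i
      = ∑ i ∈ Finset.Ico m (m + n), u ^ i := by
    intro m n
    rw [Finset.sum_Ico_eq_sum_range]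
    simp [pow_add, Finset.mul_sum]
  constructor
  · intro k hk1 hkW
    have hK := key k hk1 hkW
    have h1' := hshift (k - 1) (W + 1)
    have h2' := hshift W k
    have hnat : k - 1 + (W + 1) = W + k := by omega
    rw [hnat, ← hS] at h1'
    have hsplit := Finset.sum_Ico_consecutive (fun i => u ^ i)
      (show k - 1 ≤ W by omega) (show W ≤ W + k by omega)
    have hid : u ^ (k - 1) * S - u ^ W * ∑ i ∈ Finset.range k, u ^ i
        = ∑ i ∈ Finset.Ico (k - 1) W, u ^ i := by
      linear_combination h1' - h2' - hsplit
    rw [div_mul_eq_mul_div, div_div, eq_div_iff (mul_ne_zero ha0 hS0)]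
    linear_combination S * hK + (∑ i ∈ Finset.range k, u ^ i) * hDS
      + (G 0 - q00) * hid
  · have hfS : f * S = ((W : ℂ) + 1) * u ^ W := by
      rw [hf]; field_simp
    have hD' : ((W : ℂ) + 1) * D
        = -(G 0) * ((r : ℂ) * Complex.exp (-((lam : ℂ) * T) * (1 - x)) / x
              + (1 - (r : ℂ)) * Complex.exp (-((lam : ℂ) * σ) * (1 - x)))
          + q00 * (1 + (r : ℂ) * (1 / x - 1)
              * Complex.exp (-((lam : ℂ) * T) * (1 - x))) := by
      rw [hD]; field_simp
    have hkey2 : (f * (G 0 - q00)) * S = (-(((W : ℂ) + 1) * D)) * S := by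
      linear_combination (G 0 - q00) * hfS + ((W : ℂ) + 1) * hDS
    have hfc : f * (G 0 - q00) = -(((W : ℂ) + 1) * D) :=
      mul_right_cancel₀ hS0 hkey2
    rw [hRbar, hQbar]
    linear_combination hD' - hfc
end

section
/- The functions R̄ and Q̄ vanish at x=1 and are differentiable at x=1, with derivatives R̄'(1) = λ·(rT+(1−r)σ)·(1 + W/(2(1−r))) − r and Q̄'(1) = λ·(rT+(1−r)σ)·W/(2(1−r)) − r. Consequently, −R̄'(1)/r = 1 − λ·(rT+(1−r)σ)·(1 + W/(2(1−r)))/r, and −R̄'(1)/r > 0 if and only if λ < r(1−r)/( (1−r+W/2)·(rT+(1−r)σ) ). -/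
open scoped BigOperators

/-- `R̄` and `Q̄` vanish at `x = 1` and are differentiable there,
with `R̄'(1) = λ(rT+(1-r)σ)(1 + W/(2(1-r))) - r` and
`Q̄'(1) = λ(rT+(1-r)σ)·W/(2(1-r)) - r`; consequently
`-R̄'(1)/r = 1 - λ(rT+(1-r)σ)(1+W/(2(1-r)))/r`, which is positive iff
`λ < r(1-r)/((1-r+W/2)(rT+(1-r)σ))`. -/
theorem fair_R_Q_derivatives_at_one
    (lam σ T r : ℝ) (hlam : 0 < lam) (hσ : 0 < σ) (hT : 0 < T)
    (hr0 : 0 < r) (hr1 : r < 1) (W : ℕ) (hW : 1 ≤ W)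
    (u S f Rbar Qbar : ℝ → ℝ)
    (hu : ∀ x : ℝ, u x
      = (1 - r * Real.exp (-(lam * T) * (1 - x))) / ((1 - r) * Real.exp (-(lam * σ) * (1 - x))))
    (hS : ∀ x : ℝ, S x = ∑ i ∈ Finset.range (W + 1), u x ^ i)
    (hf : ∀ x : ℝ, f x = ((W : ℝ) + 1) * u x ^ W / S x)
    (hRbar : ∀ x : ℝ, Rbar x = r * Real.exp (-(lam * T) * (1 - x)) / x
        + (1 - r) * Real.exp (-(lam * σ) * (1 - x)) - f x)
    (hQbar : ∀ x : ℝ, Qbar x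
        = 1 + r * (1 / x - 1) * Real.exp (-(lam * T) * (1 - x)) - f x) :
    Rbar 1 = 0 ∧ Qbar 1 = 0
      ∧ HasDerivAt Rbar
          (lam * (r * T + (1 - r) * σ) * (1 + W / (2 * (1 - r))) - r) 1
      ∧ HasDerivAt Qbar
          (lam * (r * T + (1 - r) * σ) * (W / (2 * (1 - r))) - r) 1
      ∧ -(lam * (r * T + (1 - r) * σ) * (1 + W / (2 * (1 - r))) - r) / r
          = 1 - lam * (r * T + (1 - r) * σ) * (1 + W / (2 * (1 - r))) / r
      ∧ (0 < -(lam * (r * T + (1 - r) * σ) * (1 + W / (2 * (1 - r))) - r) / r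
          ↔ lam < r * (1 - r) / ((1 - r + W / 2) * (r * T + (1 - r) * σ))) := by

  have h1r : (0:ℝ) < 1 - r := by linarith
  have h1r' : (1:ℝ) - r ≠ 0 := ne_of_gt h1r
  have hrne : r ≠ 0 := ne_of_gt hr0
  have hP : (0:ℝ) < r * T + (1 - r) * σ := by
    have : 0 < r * T := mul_pos hr0 hT
    have : 0 < (1 - r) * σ := mul_pos h1r hσ
    linarith [mul_pos hr0 hT]
  have hE1T : Real.exp (-(lam * T) * (1 - 1)) = 1 := by norm_num
  have hE1σ : Real.exp (-(lam * σ) * (1 - 1)) = 1 := by norm_num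
  -- values at 1
  have hu1 : u 1 = 1 := by
    rw [hu 1, hE1T, hE1σ, mul_one, mul_one]
    exact div_self h1r'
  have hS1 : S 1 = (W : ℝ) + 1 := by
    rw [hS 1]
    simp [hu1]
  have hWne : ((W : ℝ) + 1) ≠ 0 := by positivity
  have hf1 : f 1 = 1 := by
    rw [hf 1, hu1, hS1, one_pow, mul_one]
    exact div_self hWne
  have hR1 : Rbar 1 = 0 := by
    rw [hRbar 1, hf1, hE1T, hE1σ]
    ring
  have hQ1 : Qbar 1 = 0 := by
    rw [hQbar 1, hf1, hE1T]
    ring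
  -- derivative building blocks
  have hlin : ∀ c : ℝ, HasDerivAt (fun x : ℝ => -c * (1 - x)) c 1 := by
    intro c
    have h := ((hasDerivAt_id (1:ℝ)).const_sub 1).const_mul (-c)
    simpa using h
  have hET : HasDerivAt (fun x : ℝ => Real.exp (-(lam * T) * (1 - x))) (lam * T) 1 := by
    have h := (hlin (lam * T)).exp
    simpa using h
  have hEσ : HasDerivAt (fun x : ℝ => Real.exp (-(lam * σ) * (1 - x))) (lam * σ) 1 := by
    have h := (hlin (lam * σ)).exp
    simpa using h
  set uD : ℝ := -(lam * (r * T + (1 - r) * σ)) / (1 - r) with huDdef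
  have huD : HasDerivAt u uD 1 := by
    have hN : HasDerivAt (fun x : ℝ => 1 - r * Real.exp (-(lam * T) * (1 - x)))
        (-(r * (lam * T))) 1 := (hET.const_mul r).const_sub 1
    have hD : HasDerivAt (fun x : ℝ => (1 - r) * Real.exp (-(lam * σ) * (1 - x)))
        ((1 - r) * (lam * σ)) 1 := hEσ.const_mul (1 - r)
    have hDne : (fun x : ℝ => (1 - r) * Real.exp (-(lam * σ) * (1 - x))) 1 ≠ 0 := by
      simp only [hE1σ, mul_one]
      exact h1r'
    have h := hN.div hD hDne
    have hfun : u = fun x => (1 - r * Real.exp (-(lam * T) * (1 - x))) /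
        ((1 - r) * Real.exp (-(lam * σ) * (1 - x))) := funext hu
    rw [hfun]
    refine h.congr_deriv ?_
    simp only [hE1T, hE1σ, mul_one]
    rw [huDdef]
    field_simp
    ring
  have hsum : ∑ i ∈ Finset.range (W + 1), (i : ℝ) = W * (W + 1) / 2 := by
    have h2 := Finset.sum_range_id_mul_two (W + 1)
    simp only [Nat.add_sub_cancel] at h2
    have h3 := congrArg (fun n : ℕ => (n : ℝ)) h2
    push_cast at h3
    linarith
  have hSD : HasDerivAt S ((W : ℝ) * (W + 1) / 2 * uD) 1 := by
    have h : HasDerivAt (fun x => ∑ i ∈ Finset.range (W + 1), u x ^ i)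
        (∑ i ∈ Finset.range (W + 1), (i : ℝ) * u 1 ^ (i - 1) * uD) 1 :=
      HasDerivAt.fun_sum fun i _ => huD.pow i
    have hfun : S = fun x => ∑ i ∈ Finset.range (W + 1), u x ^ i := funext hS
    rw [hfun]
    convert h using 1
    simp only [hu1, one_pow, mul_one]
    rw [← Finset.sum_mul, hsum]
  have hS1ne : S 1 ≠ 0 := by rw [hS1]; exact hWne
  have hfD : HasDerivAt f ((W : ℝ) / 2 * uD) 1 := by
    have hNum : HasDerivAt (fun x => ((W : ℝ) + 1) * u x ^ W)
        (((W : ℝ) + 1) * ((W : ℝ) * u 1 ^ (W - 1) * uD)) 1 := (huD.pow W).const_mul _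
    have h := hNum.div hSD hS1ne
    have hfun : f = fun x => ((W : ℝ) + 1) * u x ^ W / S x := funext hf
    rw [hfun]
    refine h.congr_deriv ?_
    rw [hu1, hS1, one_pow, one_pow, mul_one]
    field_simp
    ring
  have hRD : HasDerivAt Rbar
      (lam * (r * T + (1 - r) * σ) * (1 + W / (2 * (1 - r))) - r) 1 := by
    have hfrac : HasDerivAt (fun x : ℝ => r * Real.exp (-(lam * T) * (1 - x)) / x)
        (r * (lam * T) - r) 1 := by
      have h := (hET.const_mul r).div (hasDerivAt_id 1) one_ne_zero
      refine h.congr_deriv ?_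
      simp [hE1T]
    have hfun : Rbar = fun x => r * Real.exp (-(lam * T) * (1 - x)) / x
        + (1 - r) * Real.exp (-(lam * σ) * (1 - x)) - f x := funext hRbar
    rw [hfun]
    have h := (hfrac.add (hEσ.const_mul (1 - r))).sub hfD
    refine h.congr_deriv ?_
    rw [huDdef]
    field_simp
    ring
  have hQD : HasDerivAt Qbar
      (lam * (r * T + (1 - r) * σ) * ((W : ℝ) / (2 * (1 - r))) - r) 1 := by
    have hg : HasDerivAt (fun x : ℝ => r * (1 / x - 1)) (-r) 1 := by
      have h := ((hasDerivAt_inv one_ne_zero).sub_const 1).const_mul r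
      simp only [one_div]
      refine h.congr_deriv ?_
      norm_num
    have hgE : HasDerivAt (fun x : ℝ => r * (1 / x - 1) * Real.exp (-(lam * T) * (1 - x)))
        (-r) 1 := by
      have h := hg.mul hET
      refine h.congr_deriv ?_
      simp [hE1T]
    have hfun : Qbar = fun x => 1 + r * (1 / x - 1) * Real.exp (-(lam * T) * (1 - x)) - f x :=
      funext hQbar
    rw [hfun]
    have h := (hgE.const_add 1).sub hfD
    refine h.congr_deriv ?_
    rw [huDdef]
    field_simp
    ring
  refine ⟨hR1, hQ1, hRD, hQD, by field_simp; ring, ?_⟩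
  set X := lam * (r * T + (1 - r) * σ) * (1 + W / (2 * (1 - r))) with hX
  have hXid : X * (1 - r) = lam * ((1 - r + W / 2) * (r * T + (1 - r) * σ)) := by
    rw [hX]
    field_simp
  have hpos2 : (0:ℝ) < 1 - r + W / 2 := by
    have : (0:ℝ) ≤ (W : ℝ) / 2 := by positivity
    linarith
  have hden : (0:ℝ) < (1 - r + W / 2) * (r * T + (1 - r) * σ) := mul_pos hpos2 hP
  have h1 : 0 < -(X - r) / r ↔ X < r := by
    constructor
    · intro h
      by_contra hc
      push_neg at hc
      have hle : -(X - r) / r ≤ 0 :=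
        div_nonpos_of_nonpos_of_nonneg (by linarith) (le_of_lt hr0)
      linarith
    · intro h
      exact div_pos (by linarith) hr0
  have h2 : X < r ↔ lam < r * (1 - r) / ((1 - r + W / 2) * (r * T + (1 - r) * σ)) := by
    rw [lt_div_iff₀ hden]
    constructor
    · intro h
      have h' := mul_lt_mul_of_pos_right h h1r
      rw [hXid] at h'
      linarith
    · intro h
      have h' : X * (1 - r) < r * (1 - r) := by rw [hXid]; linarith
      exact (mul_lt_mul_iff_left₀ h1r).mp h'
  exact h1.trans h2
end

section
/- Let u ∈ (0,1) satisfy 2u^{M+1} = W(1−u), and assume 0 < σ < T. Then both denominators T + W(σ−T)(1−u)/2 = T(1−u^{M+1}) + σ·u^{M+1} and T + Wσ(1−u)/(u(2+W)−W) are positive, and the strict inequality (1−u)/( T + Wσ(1−u)/(u(2+W)−W) ) < (1−u)/( T + W(σ−T)(1−u)/2 ) holds; that is, the maximum throughput of the fair model is strictly smaller than that of the greedy model. -/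
/-- The maximum throughput of the fair model is strictly smaller
than that of the greedy model. -/
theorem fair_max_throughput_lt_greedy
    (σ T : ℝ) (hσ : 0 < σ) (hσT : σ < T)
    (W M : ℕ) (hW : 1 ≤ W) (hM : 1 ≤ M)
    (u : ℝ) (hu : u ∈ Set.Ioo (0 : ℝ) 1)
    (hsat : 2 * u ^ (M + 1) = W * (1 - u)) :
    T + W * (σ - T) * (1 - u) / 2 = T * (1 - u ^ (M + 1)) + σ * u ^ (M + 1)
      ∧ 0 < T + W * (σ - T) * (1 - u) / 2
      ∧ 0 < T + W * σ * (1 - u) / (u * (2 + W) - W)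
      ∧ (1 - u) / (T + W * σ * (1 - u) / (u * (2 + W) - W))
          < (1 - u) / (T + W * (σ - T) * (1 - u) / 2) := by
  obtain ⟨hu0, hu1⟩ := hu
  set a := u ^ (M + 1) with ha
  have ha0 : 0 < a := pow_pos hu0 _
  have ha1 : a < 1 := pow_lt_one₀ (le_of_lt hu0) hu1 (by omega)
  have hau : a < u := by
    calc a = u ^ (M + 1) := rfl
    _ < u ^ 1 := pow_lt_pow_right_of_lt_one₀ hu0 hu1 (by omega)
    _ = u := pow_one u
  -- rewrite the greedy extra term
  have hgr : W * (σ - T) * (1 - u) / 2 = (σ - T) * a := by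
    have : (W : ℝ) * (1 - u) = 2 * a := hsat.symm
    field_simp
    nlinarith [this]
  have hD : u * (2 + W) - W = 2 * (u - a) := by
    have : (W : ℝ) * (1 - u) = 2 * a := hsat.symm
    nlinarith [this]
  have hDpos : 0 < u * (2 + W) - W := by rw [hD]; linarith
  have hfa : W * σ * (1 - u) / (u * (2 + W) - W) = σ * a / (u - a) := by
    have h2a : (W : ℝ) * σ * (1 - u) = σ * (2 * a) := by
      have := hsat.symm; nlinarith
    rw [hD, h2a]
    have hne : u - a ≠ 0 := by linarith
    field_simp
  have hgpos : 0 < T + W * (σ - T) * (1 - u) / 2 := by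
    rw [hgr]; nlinarith
  refine ⟨by rw [hgr]; ring, hgpos, ?_, ?_⟩
  · rw [hfa]
    have : 0 < σ * a / (u - a) := div_pos (by positivity) (by linarith)
    linarith
  · apply div_lt_div_of_pos_left (by linarith) hgpos
    rw [hgr, hfa]
    have h1 : (σ - T) * a < 0 := mul_neg_of_neg_of_pos (by linarith) ha0
    have h2 : 0 < σ * a / (u - a) := div_pos (by positivity) (by linarith)
    linarith
end

section
/- Fix a real s > 0 and set f = (1−r)·exp(−sσ)/(1 − r·exp(−sT)) and v = exp(−sT)·(∑_{i=0}^{W} f^i)/(W+1). Let φ : {0,1,…,W} × ℕ → ℝ satisfy: φ(0,0)=1; for all 1≤k≤W and all n≥0, φ(k,n) = (1−r)·exp(−sσ)·φ(k−1,n) + r·exp(−sT)·φ(k,n); and for all n≥1, φ(0,n) = (exp(−sT)/(W+1))·∑_{ℓ=0}^{W} φ(ℓ,n−1). Then φ(k,n) = f^k · v^n for all 0≤k≤W and n≥0. Consequently, for any summable nonnegative family p(k,n) (0≤k≤W, n≥0), the Laplace transform ψ*(s) = ∑_{k=0}^{W} ∑_{n≥0} p(k,n)·φ(k,n) of the stationary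 virtual waiting time equals ∑_{k=0}^{W} f^k · F_k(v), where F_k(x) = ∑_{n≥0} p(k,n)·x^n. -/
open scoped BigOperators

/-- The conditional waiting-time Laplace transforms of the greedy
model satisfy `φ(k,n) = f^k·v^n`, and consequently the Laplace transform of the
stationary virtual waiting time is `ψ*(s) = ∑_{k=0}^{W} f^k·F_k(v)`. -/
theorem greedy_waiting_time_transform
    (σ T r : ℝ) (hσ : 0 < σ) (hT : 0 < T)
    (hr0 : 0 < r) (hr1 : r < 1) (W : ℕ) (hW : 1 ≤ W)
    (s : ℝ) (hs : 0 < s)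
    (f v : ℝ)
    (hf : f = (1 - r) * Real.exp (-(s * σ)) / (1 - r * Real.exp (-(s * T))))
    (hv : v = Real.exp (-(s * T)) * (∑ i ∈ Finset.range (W + 1), f ^ i) / ((W : ℝ) + 1))
    (φ : ℕ × ℕ → ℝ)
    (hφ00 : φ (0, 0) = 1)
    (hφk : ∀ k : ℕ, 1 ≤ k → k ≤ W → ∀ n : ℕ,
      φ (k, n) = (1 - r) * Real.exp (-(s * σ)) * φ (k - 1, n)
        + r * Real.exp (-(s * T)) * φ (k, n))
    (hφ0 : ∀ n : ℕ, 1 ≤ n →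
      φ (0, n) = Real.exp (-(s * T)) / ((W : ℝ) + 1)
        * ∑ l ∈ Finset.range (W + 1), φ (l, n - 1)) :
    (∀ k : ℕ, k ≤ W → ∀ n : ℕ, φ (k, n) = f ^ k * v ^ n)
      ∧ ∀ p : ℕ × ℕ → ℝ, (∀ k n : ℕ, 0 ≤ p (k, n)) → Summable p →
          ∑ k ∈ Finset.range (W + 1), ∑' n : ℕ, p (k, n) * φ (k, n)
            = ∑ k ∈ Finset.range (W + 1), f ^ k * ∑' n : ℕ, p (k, n) * v ^ n := by

  have hA1 : Real.exp (-(s * T)) < 1 := by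
    rw [Real.exp_lt_one_iff]; nlinarith
  have hApos : (0:ℝ) < Real.exp (-(s * T)) := Real.exp_pos _
  have hden : 0 < 1 - r * Real.exp (-(s * T)) := by nlinarith
  have hstep : ∀ k : ℕ, 1 ≤ k → k ≤ W → ∀ n : ℕ, φ (k, n) = f * φ (k - 1, n) := by
    intro k h1 h2 n
    have h := hφk k h1 h2 n
    rw [hf]
    field_simp
    linear_combination h
  have hkey : ∀ k : ℕ, k ≤ W → ∀ n : ℕ, φ (k, n) = f ^ k * φ (0, n) := by
    intro k
    induction k with
    | zero => intro _ n; simp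
    | succ k ih =>
      intro hk n
      rw [hstep (k + 1) (by omega) hk n]
      simp only [Nat.add_sub_cancel]
      rw [ih (by omega) n]; ring
  have hv0 : ∀ n : ℕ, φ (0, n) = v ^ n := by
    intro n
    induction n with
    | zero => simpa using hφ00
    | succ n ih =>
      have h := hφ0 (n + 1) (by omega)
      simp only [Nat.add_sub_cancel] at h
      have hsum : ∑ l ∈ Finset.range (W + 1), φ (l, n)
          = (∑ l ∈ Finset.range (W + 1), f ^ l) * v ^ n := by
        rw [Finset.sum_mul]
        refine Finset.sum_congr rfl ?_
        intro l hl
        rw [hkey l (by simpa [Nat.lt_succ_iff] using Finset.mem_range.mp hl) n, ih]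
      rw [h, hsum, hv]
      have hW1 : ((W : ℝ) + 1) ≠ 0 := by positivity
      ring
  have hmain : ∀ k : ℕ, k ≤ W → ∀ n : ℕ, φ (k, n) = f ^ k * v ^ n := by
    intro k hk n; rw [hkey k hk n, hv0 n]
  refine ⟨hmain, ?_⟩
  intro p hp hsum
  refine Finset.sum_congr rfl ?_
  intro k hk
  have hkW : k ≤ W := by simpa [Nat.lt_succ_iff] using Finset.mem_range.mp hk
  rw [← tsum_mul_left]
  refine tsum_congr ?_
  intro n
  rw [hmain k hkW n]; ring
end
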